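/- arXiv:2001.10333 — 9 statements merged into one kernel-verified Lean document; each statement's English description precedes it below -/
import Mathlib

section
/- Suppose a frame 𝔎 = (K, R, ⋆, I) satisfies (involution). Then: (1) if 𝔎 satisfies at least one of (left rotation), (right rotation) and at least one of (center reflection), (left reflection), (right reflection), then 𝔎 satisfies all five conditions (left rotation), (right rotation), (center reflection), (left reflection), (right reflection); (2) if 𝔎 satisfies at least two distinct conditions among (center reflection), (left reflection), (right reflection), then 𝔎 satisfies all five conditions (left rotation), (right rotation), (center reflection), (left reflection), (right reflection). -/
/-- Frame condition (left rotation): `R x y z → R y (⋆z) (⋆x)`. -/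
def LeftRot {K : Type*} (R : K → K → K → Prop) (s : K → K) : Prop :=
  ∀ x y z, R x y z → R y (s z) (s x)

/-- Frame condition (right rotation): `R x y z → R (⋆z) x (⋆y)`. -/
def RightRot {K : Type*} (R : K → K → K → Prop) (s : K → K) : Prop :=
  ∀ x y z, R x y z → R (s z) x (s y)

/-- Frame condition (center reflection): `R x y z → R (⋆y) (⋆x) (⋆z)`. -/
def CenterRefl {K : Type*} (R : K → K → K → Prop) (s : K → K) : Prop :=
  ∀ x y z, R x y z → R (s y) (s x) (s z)

/-- Frame condition (left reflection): `R x y z → R (⋆x) z y`. -/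
def LeftRefl {K : Type*} (R : K → K → K → Prop) (s : K → K) : Prop :=
  ∀ x y z, R x y z → R (s x) z y

/-- Frame condition (right reflection): `R x y z → R z (⋆y) x`. -/
def RightRefl {K : Type*} (R : K → K → K → Prop) (s : K → K) : Prop :=
  ∀ x y z, R x y z → R z (s y) x


section Helpers
variable {K : Type*} (R : K → K → K → Prop) (s : K → K)

lemma rr_of_lr (hinv : ∀ x : K, s (s x) = x) (h : LeftRot R s) : RightRot R s := by
  intro x y z hx
  have := h _ _ _ (h _ _ _ hx)
  simpa [hinv] using this

lemma lr_of_rr (hinv : ∀ x : K, s (s x) = x) (h : RightRot R s) : LeftRot R s := by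
  intro x y z hx
  have := h _ _ _ (h _ _ _ hx)
  simpa [hinv] using this

-- compositions with LeftRot
lemma rrefl_of_lr_cr (hinv : ∀ x : K, s (s x) = x) (h : LeftRot R s) (hc : CenterRefl R s) : RightRefl R s := by
  intro x y z hx
  have := hc _ _ _ (h _ _ _ hx)
  simpa [hinv] using this

lemma crefl_of_lr_lrefl (hinv : ∀ x : K, s (s x) = x) (h : LeftRot R s) (hl : LeftRefl R s) : CenterRefl R s := by
  intro x y z hx
  have := hl _ _ _ (h _ _ _ hx)
  simpa [hinv] using this

lemma lrefl_of_lr_rrefl (hinv : ∀ x : K, s (s x) = x) (h : LeftRot R s) (hr : RightRefl R s) : LeftRefl R s := by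
  intro x y z hx
  have := hr _ _ _ (h _ _ _ hx)
  simpa [hinv] using this

-- two reflections give a rotation
lemma lr_of_lrefl_cr (hinv : ∀ x : K, s (s x) = x) (hc : CenterRefl R s) (hl : LeftRefl R s) : LeftRot R s := by
  intro x y z hx
  have := hl _ _ _ (hc _ _ _ hx)
  simpa [hinv] using this

lemma lr_of_cr_rrefl (hinv : ∀ x : K, s (s x) = x) (hc : CenterRefl R s) (hr : RightRefl R s) : LeftRot R s := by
  intro x y z hx
  have := hc _ _ _ (hr _ _ _ hx)
  simpa [hinv] using this

lemma rr_of_lrefl_rrefl (hinv : ∀ x : K, s (s x) = x) (hl : LeftRefl R s) (hr : RightRefl R s) : RightRot R s := by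
  intro x y z hx
  have := hl _ _ _ (hr _ _ _ hx)
  simpa [hinv] using this

lemma all_of_lr_refl (hinv : ∀ x : K, s (s x) = x) (h : LeftRot R s)
    (hrefl : CenterRefl R s ∨ LeftRefl R s ∨ RightRefl R s) :
    LeftRot R s ∧ RightRot R s ∧ CenterRefl R s ∧ LeftRefl R s ∧ RightRefl R s := by
  rcases hrefl with hc | hl | hr
  · have hr := rrefl_of_lr_cr R s hinv h hc
    have hl := lrefl_of_lr_rrefl R s hinv h hr
    exact ⟨h, rr_of_lr R s hinv h, hc, hl, hr⟩
  · have hc := crefl_of_lr_lrefl R s hinv h hl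
    have hr := rrefl_of_lr_cr R s hinv h hc
    exact ⟨h, rr_of_lr R s hinv h, hc, hl, hr⟩
  · have hl := lrefl_of_lr_rrefl R s hinv h hr
    have hc := crefl_of_lr_lrefl R s hinv h hl
    exact ⟨h, rr_of_lr R s hinv h, hc, hl, hr⟩

end Helpers

/-- Lemma "five": in a frame `(K, R, ⋆, I)` satisfying (involution),
(1) one rotation plus one reflection gives all five conditions;
(2) any two distinct reflections give all five conditions. -/
theorem lemma_five {K : Type*} (R : K → K → K → Prop) (s : K → K) (I : Set K)
    (hinv : ∀ x : K, s (s x) = x) :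
    (((LeftRot R s ∨ RightRot R s) ∧
        (CenterRefl R s ∨ LeftRefl R s ∨ RightRefl R s)) →
      LeftRot R s ∧ RightRot R s ∧ CenterRefl R s ∧ LeftRefl R s ∧ RightRefl R s) ∧
    (((CenterRefl R s ∧ LeftRefl R s) ∨ (CenterRefl R s ∧ RightRefl R s) ∨
        (LeftRefl R s ∧ RightRefl R s)) →
      LeftRot R s ∧ RightRot R s ∧ CenterRefl R s ∧ LeftRefl R s ∧ RightRefl R s) := by
  constructor
  · rintro ⟨hrot, hrefl⟩
    have hlr : LeftRot R s := by
      rcases hrot with h | h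
      · exact h
      · exact lr_of_rr R s hinv h
    exact all_of_lr_refl R s hinv hlr hrefl
  · rintro (⟨hc, hl⟩ | ⟨hc, hr⟩ | ⟨hl, hr⟩)
    · exact all_of_lr_refl R s hinv (lr_of_lrefl_cr R s hinv hc hl) (Or.inl hc)
    · exact all_of_lr_refl R s hinv (lr_of_cr_rrefl R s hinv hc hr) (Or.inl hc)
    · exact all_of_lr_refl R s hinv (lr_of_rr R s hinv (rr_of_lrefl_rrefl R s hinv hl hr)) (Or.inr (Or.inl hl))
end

section
/- Let 𝔎 = (K, R, ⋆, I) be a frame satisfying (left reflection) and (identity). Then 𝔎 satisfies (involution), and for all x, y, z ∈ K one has R x y z ↔ R (⋆x) z y (i.e., the left reflection condition holds as a biconditional). -/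
/-- Frame condition (identity): `x = y ↔ ∃ u ∈ I, R x u y`. -/
def IdentityCond {K : Type*} (R : K → K → K → Prop) (I : Set K) : Prop :=
  ∀ x y, x = y ↔ ∃ u, u ∈ I ∧ R x u y

/-- Lemma lem8(i): a frame satisfying (left reflection) and (identity) satisfies
(involution), and left reflection holds as a biconditional. -/
theorem lem8_i {K : Type*} (R : K → K → K → Prop) (s : K → K) (I : Set K)
    (hlr : LeftRefl R s) (hid : IdentityCond R I) :
    (∀ x : K, s (s x) = x) ∧ (∀ x y z : K, R x y z ↔ R (s x) z y) := by
  have hinv : ∀ x : K, s (s x) = x := by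
    intro x
    obtain ⟨u, hu, hR⟩ := (hid x x).mp rfl
    have h1 := hlr _ _ _ hR
    have h2 := hlr _ _ _ h1
    exact (hid (s (s x)) x).mpr ⟨u, hu, h2⟩
  refine ⟨hinv, fun x y z => ⟨hlr x y z, fun h => ?_⟩⟩
  have := hlr _ _ _ h
  rwa [hinv] at this
end

section
/- Let 𝔎 = (K, R, ⋆, I) be a frame satisfying (left reflection), (right reflection), and (identity). Then ⋆v = v for every v ∈ I. -/
/-- Lemma lem8(ii): in a frame satisfying (left reflection), (right reflection),
and (identity), every element of `I` is fixed by `⋆`. -/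
theorem lem8_ii {K : Type*} (R : K → K → K → Prop) (s : K → K) (I : Set K)
    (hlr : LeftRefl R s) (hrr : RightRefl R s) (hid : IdentityCond R I) :
    ∀ v ∈ I, s v = v := by
  intro v hv
  obtain ⟨u, hu, hvuv⟩ := (hid v v).mp rfl
  have h1 : R (s v) v u := hlr v u v hvuv
  have hsvu : s v = u := (hid (s v) u).mpr ⟨v, hv, h1⟩
  have huvu : R u v u := hsvu ▸ h1
  have huuu : R u u u := by
    have := hrr u v u huvu
    rwa [← hsvu, hsvu] at this
  have h2 : R (s u) u u := hlr u u u huuu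
  have hsuu : s u = u := (hid (s u) u).mpr ⟨u, hu, h2⟩
  have h3 : R (s u) u v := hlr u v u huvu
  rw [hsuu] at h3
  have huv : u = v := (hid u v).mpr ⟨u, hu, h3⟩
  rw [hsvu, huv]
end

section
/- Let 𝔎 = (K, R, ⋆, I) be a frame satisfying (left reflection), (right reflection), (identity), and (semi-Pasch). If x ∈ K, u, v ∈ I, R x u x, and R x v x, then u = v. -/
/-- Frame condition (semi-Pasch): `(∃ x, R v w x ∧ R x y z) → ∃ u, R v u z`. -/
def SemiPasch {K : Type*} (R : K → K → K → Prop) : Prop :=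
  ∀ v w y z, (∃ x, R v w x ∧ R x y z) → ∃ u, R v u z

/-- Lemma lem8(iii): in a frame satisfying (left reflection), (right reflection),
(identity), and (semi-Pasch), if `u, v ∈ I`, `R x u x`, and `R x v x`, then `u = v`. -/
theorem lem8_iii {K : Type*} (R : K → K → K → Prop) (s : K → K) (I : Set K)
    (hlr : LeftRefl R s) (hrr : RightRefl R s) (hid : IdentityCond R I)
    (hsp : SemiPasch R) :
    ∀ (x u v : K), u ∈ I → v ∈ I → R x u x → R x v x → u = v := by
  intro x u v hu hv h1 h2
  -- From R x u x: R (s x) x u, then R u (s x) (s x)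
  have h3 : R (s x) x u := hlr _ _ _ h1
  have h4 : R u (s x) (s x) := hrr _ _ _ h3
  -- From R x v x: R (s x) x v
  have h5 : R (s x) x v := hlr _ _ _ h2
  -- semi-Pasch: ∃ e, R u e v
  obtain ⟨e, he⟩ := hsp u (s x) x v ⟨s x, h4, h5⟩
  -- left reflection: R (s u) v e, and since v ∈ I, s u = e
  have h6 : R (s u) v e := hlr _ _ _ he
  have h7 : s u = e := (hid (s u) e).mpr ⟨v, hv, h6⟩
  -- identity forward on u: some i ∈ I with R u i u, and s u = i, so e ∈ I
  obtain ⟨i, hi, hri⟩ := (hid u u).mp rfl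
  have h8 : R (s u) u i := hlr _ _ _ hri
  have h9 : s u = i := (hid (s u) i).mpr ⟨u, hu, h8⟩
  -- conclude u = v
  exact (hid u v).mpr ⟨e, h7 ▸ h9 ▸ hi, he⟩
end

section
/- Let 𝔎 = (K, R, ⋆, I) be a frame. Then: (1) Cm(𝔎) is a non-associative relation algebra if and only if 𝔎 satisfies (left reflection), (right reflection), and (identity); (2) Cm(𝔎) is a semi-associative relation algebra if and only if 𝔎 satisfies (left reflection), (right reflection), (identity), and (semi-Pasch); (3) Cm(𝔎) is a relation algebra if and only if 𝔎 satisfies (left reflection), (right reflection), (identity), and (Pasch). -/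
/-- Composition in the complex algebra of a frame. -/
def scomp {K : Type*} (R : K → K → K → Prop) (X Y : Set K) : Set K :=
  {z | ∃ x ∈ X, ∃ y ∈ Y, R x y z}

/-- Converse in the complex algebra of a frame. -/
def sconv {K : Type*} (s : K → K) (X : Set K) : Set K := s '' X

/-- The complex algebra of the frame `(K, R, ⋆, I)` is a non-associative
relation algebra. -/
def CmNA {K : Type*} (R : K → K → K → Prop) (s : K → K) (I : Set K) : Prop :=
  (∀ X Y Z : Set K, scomp R (X ∪ Y) Z = scomp R X Z ∪ scomp R Y Z) ∧
  (∀ X : Set K, scomp R X I = X) ∧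
  (∀ X : Set K, sconv s (sconv s X) = X) ∧
  (∀ X Y : Set K, sconv s (X ∪ Y) = sconv s X ∪ sconv s Y) ∧
  (∀ X Y : Set K, sconv s (scomp R X Y) = scomp R (sconv s Y) (sconv s X)) ∧
  (∀ X Y : Set K, scomp R (sconv s X) (scomp R X Y)ᶜ ⊆ Yᶜ)

/-- The complex algebra is a semi-associative relation algebra. -/
def CmSA {K : Type*} (R : K → K → K → Prop) (s : K → K) (I : Set K) : Prop :=
  CmNA R s I ∧
  ∀ X Y : Set K, scomp R X (scomp R Y Set.univ) = scomp R (scomp R X Y) Set.univ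

/-- The complex algebra is a relation algebra. -/
def CmRA {K : Type*} (R : K → K → K → Prop) (s : K → K) (I : Set K) : Prop :=
  CmNA R s I ∧
  ∀ X Y Z : Set K, scomp R X (scomp R Y Z) = scomp R (scomp R X Y) Z

/-- Frame condition (Pasch). -/
def Pasch {K : Type*} (R : K → K → K → Prop) : Prop :=
  ∀ v w y z, (∃ x, R v w x ∧ R x y z) → ∃ u, R v u z ∧ R w y u


section Aux

variable {K : Type*} {R : K → K → K → Prop} {s : K → K} {I : Set K}

lemma aux_ss (lr : LeftRefl R s) (idc : IdentityCond R I) : ∀ x, s (s x) = x := by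
  intro x
  obtain ⟨u, hu, hR⟩ := (idc x x).mp rfl
  exact (idc (s (s x)) x).mpr ⟨u, hu, lr _ _ _ (lr _ _ _ hR)⟩

lemma aux_na (lr : LeftRefl R s) (rr : RightRefl R s) (idc : IdentityCond R I) :
    CmNA R s I := by
  have ss := aux_ss lr idc
  refine ⟨?_, ?_, ?_, ?_, ?_, ?_⟩
  · intro X Y Z
    ext z
    simp only [scomp, Set.mem_setOf_eq, Set.mem_union]
    constructor
    · rintro ⟨x, hx | hx, y, hy, h⟩
      · exact Or.inl ⟨x, hx, y, hy, h⟩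
      · exact Or.inr ⟨x, hx, y, hy, h⟩
    · rintro (⟨x, hx, y, hy, h⟩ | ⟨x, hx, y, hy, h⟩)
      · exact ⟨x, Or.inl hx, y, hy, h⟩
      · exact ⟨x, Or.inr hx, y, hy, h⟩
  · intro X
    ext z
    constructor
    · rintro ⟨x, hx, u, hu, hR⟩
      rwa [← (idc x z).mpr ⟨u, hu, hR⟩]
    · intro hz
      obtain ⟨u, hu, hR⟩ := (idc z z).mp rfl
      exact ⟨z, hz, u, hu, hR⟩
  · intro X
    have h : s ∘ s = id := funext ss
    show s '' (s '' X) = X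
    rw [← Set.image_comp, h, Set.image_id]
  · intro X Y
    exact Set.image_union s X Y
  · intro X Y
    ext w
    constructor
    · rintro ⟨z, ⟨x, hx, y, hy, hR⟩, rfl⟩
      refine ⟨s y, ⟨y, hy, rfl⟩, s x, ⟨x, hx, rfl⟩, ?_⟩
      exact lr _ _ _ (rr _ _ _ (lr _ _ _ hR))
    · rintro ⟨a, ⟨y, hy, rfl⟩, b, ⟨x, hx, rfl⟩, hR⟩
      refine ⟨s w, ⟨x, hx, y, hy, ?_⟩, ss w⟩
      have h1 := lr _ _ _ hR
      rw [ss] at h1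
      have h2 := lr _ _ _ (rr _ _ _ h1)
      rwa [ss] at h2
  · intro X Y
    rintro w ⟨a, ⟨x, hx, rfl⟩, b, hb, hR⟩ hw
    have h1 := lr _ _ _ hR
    rw [ss] at h1
    exact hb ⟨x, hx, w, hw, h1⟩

lemma aux_na_conv (h : CmNA R s I) :
    LeftRefl R s ∧ RightRefl R s ∧ IdentityCond R I := by
  obtain ⟨-, hidl, hinv, -, hconv, hcyc⟩ := h
  -- pointwise involution
  have ss : ∀ x, s (s x) = x := by
    intro x
    have h1 := hinv {x}
    have hmem : s (s x) ∈ sconv s (sconv s ({x} : Set K)) :=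
      ⟨s x, ⟨x, rfl, rfl⟩, rfl⟩
    rw [h1] at hmem
    exact hmem
  -- cycle rule at points
  have cyc : ∀ x b w, R (s x) b w → R x w b := by
    intro x b w hR
    by_contra hnb
    have hb : b ∈ (scomp R {x} {w})ᶜ := by
      rintro ⟨x', (rfl : x' = x), w', (rfl : w' = w), hc⟩
      exact hnb hc
    have : w ∈ ({w} : Set K)ᶜ :=
      hcyc {x} {w} ⟨s x, ⟨x, rfl, rfl⟩, b, hb, hR⟩
    exact this rfl
  -- left reflection
  have lr : LeftRefl R s := by
    intro x y z hR
    have := cyc (s x) y z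
    rw [ss] at this
    exact this hR
  -- converse law at points
  have conv : ∀ x y z, R x y z → R (s y) (s x) (s z) := by
    intro x y z hR
    have h1 := hconv {x} {y}
    have hmem : s z ∈ sconv s (scomp R {x} {y}) :=
      ⟨z, ⟨x, rfl, y, rfl, hR⟩, rfl⟩
    rw [h1] at hmem
    obtain ⟨a, ⟨y', (rfl : y' = y), rfl⟩, b, ⟨x', (rfl : x' = x), rfl⟩, hc⟩ := hmem
    exact hc
  -- right reflection
  have rr : RightRefl R s := by
    intro x y z hR
    have h1 := conv _ _ _ hR
    have h2 := lr _ _ _ h1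
    rw [ss] at h2
    have h3 := conv _ _ _ h2
    rw [ss, ss] at h3
    exact h3
  refine ⟨lr, rr, ?_⟩
  intro x y
  constructor
  · rintro rfl
    have h1 := hidl {x}
    have : x ∈ scomp R {x} I := by rw [h1]; rfl
    obtain ⟨x', (rfl : x' = x), u, hu, hR⟩ := this
    exact ⟨u, hu, hR⟩
  · rintro ⟨u, hu, hR⟩
    have h1 := hidl {x}
    have : y ∈ scomp R {x} I := ⟨x, rfl, u, hu, hR⟩
    rw [h1] at this
    exact this.symm

lemma aux_sa (lr : LeftRefl R s) (rr : RightRefl R s) (idc : IdentityCond R I)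
    (sp : SemiPasch R) :
    ∀ X Y : Set K, scomp R X (scomp R Y Set.univ) = scomp R (scomp R X Y) Set.univ := by
  have ss := aux_ss lr idc
  intro X Y
  ext z
  constructor
  · rintro ⟨x, hx, t, ⟨y, hy, q, -, hyqt⟩, hxtz⟩
    have h5 : R t (s z) (s x) := rr _ _ _ (lr _ _ _ hxtz)
    obtain ⟨u, hu⟩ := sp y q (s z) (s x) ⟨t, hyqt, h5⟩
    have hp : R x y (s u) := by
      have h1 := lr _ _ _ (rr _ _ _ hu)
      rwa [ss] at h1
    obtain ⟨r, hr⟩ := sp (s u) (s y) t z ⟨x, rr _ _ _ hp, hxtz⟩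
    exact ⟨s u, ⟨x, hx, y, hy, hp⟩, r, trivial, hr⟩
  · rintro ⟨m, ⟨x, hx, y, hy, hxym⟩, q, -, hmqz⟩
    obtain ⟨u, hu⟩ := sp x y q z ⟨m, hxym, hmqz⟩
    have h2 : R (s x) z u := lr _ _ _ hu
    have h5 : R y (s m) (s x) := rr _ _ _ (lr _ _ _ hxym)
    obtain ⟨w, hw⟩ := sp y (s m) z u ⟨s x, h5, h2⟩
    exact ⟨x, hx, u, ⟨y, hy, w, trivial, hw⟩, hu⟩

lemma aux_ra (lr : LeftRefl R s) (rr : RightRefl R s) (idc : IdentityCond R I)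
    (pa : Pasch R) :
    ∀ X Y Z : Set K, scomp R X (scomp R Y Z) = scomp R (scomp R X Y) Z := by
  have ss := aux_ss lr idc
  intro X Y Z
  ext z
  constructor
  · rintro ⟨x, hx, t, ⟨y, hy, q, hq, hyqt⟩, hxtz⟩
    obtain ⟨u, h1, h2⟩ := pa (s x) z (s q) y ⟨t, lr _ _ _ hxtz, rr _ _ _ hyqt⟩
    have hp : R x y u := by
      have := lr _ _ _ h1
      rwa [ss] at this
    have hpu : R u q z := by
      have := rr _ _ _ h2
      rwa [ss] at this
    exact ⟨u, ⟨x, hx, y, hy, hp⟩, q, hq, hpu⟩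
  · rintro ⟨m, ⟨x, hx, y, hy, hxym⟩, q, hq, hmqz⟩
    obtain ⟨u, h1, h2⟩ := pa x y q z ⟨m, hxym, hmqz⟩
    exact ⟨x, hx, u, ⟨y, hy, q, hq, h2⟩, h1⟩

end Aux

/-- Theorem: characterization of the frames whose complex algebras are
non-associative, semi-associative, or genuine relation algebras. -/
theorem cm_NA_SA_RA {K : Type*} (R : K → K → K → Prop) (s : K → K) (I : Set K) :
    (CmNA R s I ↔ (LeftRefl R s ∧ RightRefl R s ∧ IdentityCond R I)) ∧
    (CmSA R s I ↔ (LeftRefl R s ∧ RightRefl R s ∧ IdentityCond R I ∧ SemiPasch R)) ∧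
    (CmRA R s I ↔ (LeftRefl R s ∧ RightRefl R s ∧ IdentityCond R I ∧ Pasch R)) := by
  have hNA : CmNA R s I ↔ (LeftRefl R s ∧ RightRefl R s ∧ IdentityCond R I) := by
    constructor
    · exact aux_na_conv
    · rintro ⟨lr, rr, idc⟩
      exact aux_na lr rr idc
  refine ⟨hNA, ?_, ?_⟩
  · constructor
    · rintro ⟨hna, hsa⟩
      obtain ⟨lr, rr, idc⟩ := hNA.mp hna
      refine ⟨lr, rr, idc, ?_⟩
      rintro v w y z ⟨x, h1, h2⟩
      have heq := hsa {v} {w}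
      have hz : z ∈ scomp R (scomp R {v} {w}) Set.univ :=
        ⟨x, ⟨v, rfl, w, rfl, h1⟩, y, trivial, h2⟩
      rw [← heq] at hz
      obtain ⟨v', (rfl : v' = v), t, ht, hR⟩ := hz
      exact ⟨t, hR⟩
    · rintro ⟨lr, rr, idc, sp⟩
      exact ⟨aux_na lr rr idc, aux_sa lr rr idc sp⟩
  · constructor
    · rintro ⟨hna, hra⟩
      obtain ⟨lr, rr, idc⟩ := hNA.mp hna
      refine ⟨lr, rr, idc, ?_⟩
      rintro v w y z ⟨x, h1, h2⟩
      have heq := hra {v} {w} {y}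
      have hz : z ∈ scomp R (scomp R {v} {w}) {y} :=
        ⟨x, ⟨v, rfl, w, rfl, h1⟩, y, rfl, h2⟩
      rw [← heq] at hz
      obtain ⟨v', (rfl : v' = v), u, hu, hR⟩ := hz
      obtain ⟨w', (rfl : w' = w), y', (rfl : y' = y), hwyu⟩ := hu
      exact ⟨u, hR, hwyu⟩
    · rintro ⟨lr, rr, idc, pa⟩
      exact ⟨aux_na lr rr idc, aux_ra lr rr idc pa⟩
end

section
/- (1) If a frame 𝔎 = (K, R, ⋆, I) satisfies (identity) and (left reflection), then the predicate (reflection1) is valid in 𝔎. (2) If 𝔎 is a CR-frame in which (reflection1) is valid, then 𝔎 satisfies (left reflection). In particular, a CR-frame validates (reflection1) if and only if it satisfies (left reflection). -/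
/-- `(K, R, ⋆, {z0})` is a CR-frame: postulates p1–p5 of Meyer and Routley. -/
def CRFrame {K : Type*} (R : K → K → K → Prop) (s : K → K) (z0 : K) : Prop :=
  (∀ a b : K, R z0 a b ↔ a = b) ∧
  (∀ a b c d : K, (∃ x, R a b x ∧ R x c d) ↔ (∃ y, R a c y ∧ R y b d)) ∧
  (∀ a : K, R a a a) ∧
  (∀ a : K, s (s a) = a) ∧
  (∀ a b c : K, R a b c ↔ R a (s c) (s b))

/-- The relevance-logic predicate (reflection1),
`A∘B∧C → A∘(B∧∼D) ∨ (A∧C∘D)∘B`, is valid in the frame `(K, R, ⋆, I)`: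
for all `A B C D ⊆ K`, `I ⊆ K ∖ (F⌣ ; (K ∖ G))`, where `F = (A;B) ∩ C` and
`G = ((A ∩ (K ∖ D⌣));B) ∪ (A;(B ∩ (D;C)))`. -/
def Refl1Valid {K : Type*} (R : K → K → K → Prop) (s : K → K) (I : Set K) : Prop :=
  ∀ A B C D : Set K,
    I ⊆ (scomp R (sconv s (scomp R A B ∩ C))
          (scomp R (A ∩ (sconv s D)ᶜ) B ∪ scomp R A (B ∩ scomp R D C))ᶜ)ᶜ

/-- Theorem: (1) every frame satisfying (identity) and (left reflection)
validates (reflection1); (2) every CR-frame validating (reflection1)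
satisfies (left reflection); in particular, a CR-frame validates
(reflection1) iff it satisfies (left reflection). -/
theorem reflection1_char {K : Type*} (R : K → K → K → Prop) (s : K → K) :
    (∀ I : Set K, IdentityCond R I → LeftRefl R s → Refl1Valid R s I) ∧
    (∀ z0 : K, CRFrame R s z0 → Refl1Valid R s {z0} → LeftRefl R s) ∧
    (∀ z0 : K, CRFrame R s z0 → (Refl1Valid R s {z0} ↔ LeftRefl R s)) := by
  have part1 : ∀ I : Set K, IdentityCond R I → LeftRefl R s → Refl1Valid R s I := by
    intro I hid hlr
    have sinv : ∀ x, s (s x) = x := by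
      intro x
      obtain ⟨u, hu, hR⟩ := (hid x x).mp rfl
      exact (hid (s (s x)) x).mpr ⟨u, hu, hlr _ _ _ (hlr _ _ _ hR)⟩
    intro A B C D u hu hmem
    obtain ⟨p, ⟨f, hf, rfl⟩, g, hg, hR⟩ := hmem
    have hfg : f = g := by
      have h2 := hlr _ _ _ hR
      rw [sinv] at h2
      exact (hid f g).mpr ⟨u, hu, h2⟩
    obtain ⟨⟨a, ha, b, hb, hab⟩, hfC⟩ := hf
    apply hg
    subst hfg
    by_cases hd : a ∈ sconv s D
    · obtain ⟨d, hd', rfl⟩ := hd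
      right
      have hdb : R d f b := by
        have h3 := hlr _ _ _ hab
        rwa [sinv] at h3
      exact ⟨s d, ha, b, ⟨hb, d, hd', f, hfC, hdb⟩, hab⟩
    · exact Or.inl ⟨a, ⟨ha, hd⟩, b, hb, hab⟩
  have part2 : ∀ z0 : K, CRFrame R s z0 → Refl1Valid R s {z0} → LeftRefl R s := by
    rintro z0 ⟨p1, p2, p3, p4, p5⟩ hval x y z hxyz
    have comm : ∀ a b c, R a b c → R b a c := by
      intro a b c h
      obtain ⟨w, hw1, hw2⟩ := (p2 z0 a b c).mp ⟨a, (p1 a a).mpr rfl, h⟩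
      rw [(p1 b w).mp hw1]; exact hw2
    -- the validity instance forces membership in G whenever we have a witness
    have useval : ∀ A B C D : Set K, ∀ f g : K,
        f ∈ scomp R A B ∩ C → R (s f) g z0 →
        g ∈ scomp R (A ∩ (sconv s D)ᶜ) B ∪ scomp R A (B ∩ scomp R D C) := by
      intro A B C D f g hf hR
      by_contra hg
      exact hval A B C D rfl ⟨s f, ⟨f, hf, rfl⟩, g, hg, hR⟩
    -- step: s z0 = z0
    have sz0 : s z0 = z0 := by
      have hF : s z0 ∈ scomp R {z0} {s z0} ∩ (Set.univ : Set K) :=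
        ⟨⟨z0, rfl, s z0, rfl, (p1 (s z0) (s z0)).mpr rfl⟩, trivial⟩
      have hRw : R (s (s z0)) z0 z0 := by rw [p4]; exact (p1 z0 z0).mpr rfl
      have hg := useval {z0} {s z0} Set.univ {s z0} (s z0) z0 hF hRw
      rcases hg with ⟨a, ⟨ha1, ha2⟩, b, hb, hR'⟩ | ⟨a, ha, b, ⟨hb1, _⟩, hR'⟩
      · rw [Set.mem_singleton_iff] at ha1
        rw [ha1] at ha2
        exact absurd ⟨s z0, rfl, p4 z0⟩ ha2
      · rw [Set.mem_singleton_iff] at ha hb1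
        rw [ha] at hR'
        rw [← hb1]
        exact (p1 b z0).mp hR'
    -- main argument
    have hF : z ∈ scomp R {x} {y} ∩ {z} := ⟨⟨x, rfl, y, rfl, hxyz⟩, rfl⟩
    have hRw : R (s z) z z0 := by
      rw [p5 (s z) z z0, sz0]
      exact comm _ _ _ ((p1 (s z) (s z)).mpr rfl)
    have hg := useval {x} {y} {z} {s x} z z hF hRw
    rcases hg with ⟨a, ⟨ha1, ha2⟩, b, hb, hR'⟩ | ⟨a, ha, b, ⟨hb1, u', hu', v, hv, h'⟩, hR'⟩
    · rw [Set.mem_singleton_iff] at ha1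
      subst ha1
      exact absurd ⟨s a, rfl, p4 a⟩ ha2
    · rw [Set.mem_singleton_iff] at hb1 hu' hv
      subst hb1; subst hu'; subst hv
      exact h'
  refine ⟨part1, part2, fun z0 hcr => ⟨part2 z0 hcr, fun hlr => ?_⟩⟩
  obtain ⟨p1, p2, p3, p4, p5⟩ := hcr
  have comm : ∀ a b c, R a b c → R b a c := by
    intro a b c h
    obtain ⟨w, hw1, hw2⟩ := (p2 z0 a b c).mp ⟨a, (p1 a a).mpr rfl, h⟩
    rw [(p1 b w).mp hw1]; exact hw2
  have hid : IdentityCond R {z0} := by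
    intro a b
    constructor
    · rintro rfl
      exact ⟨z0, rfl, comm _ _ _ ((p1 a a).mpr rfl)⟩
    · rintro ⟨u, hu, h⟩
      rw [Set.mem_singleton_iff] at hu
      subst hu
      exact (p1 a b).mp (comm _ _ _ h)
  exact part1 {z0} hid hlr
end

section
/- Let K be a finite set with n elements, let 0 ∈ K, and let ⋆ : K → K satisfy ⋆0 = 0 and ⋆(⋆x) = x for all x ∈ K; let s be the number of x ∈ K with ⋆x = x (so 1 ≤ s and n − s is even). Then the number of ternary relations R ⊆ K × K × K such that the frame (K, R, ⋆, {0}) satisfies (left rotation), (right rotation), (center reflection), (left reflection), (right reflection), (identity), (involution), and (comm) equals 2^{F(n,s)}, where F(n,s) = (s−1)s(s+1)/6 + (n−s)(n−s+1)(n−s+2)/12 + (s−1)(n−s)(n+2)/4; and the number of such R additionally satisfying (dense) equals 2^{G(n,s)}, where G(n,s) = (s−1)(s−2)(s+3)/6 + (n−s)(n−s−1)(n−s+4)/12 + (s−1)(n−s)(n+2)/4. -/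
/-- The conditions making `(K, R, ⋆, {z0})` a commutative NA-frame:
(left rotation), (right rotation), (center reflection), (left reflection),
(right reflection), (identity), (involution), and (comm). -/
def CommNAConds {K : Type*} (R : K → K → K → Prop) (s : K → K) (z0 : K) : Prop :=
  LeftRot R s ∧ RightRot R s ∧ CenterRefl R s ∧ LeftRefl R s ∧ RightRefl R s ∧
  (∀ x y, x = y ↔ ∃ u, u ∈ ({z0} : Set K) ∧ R x u y) ∧
  (∀ x, s (s x) = x) ∧
  (∀ x y z, R x y z ↔ R y x z)


section test
variable {α : Type*}
lemma ms_swap12 (a b c : α) : ({a, b, c} : Multiset α) = {b, a, c} :=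
  Multiset.cons_swap a b {c}
lemma ms_swap23 (a b c : α) : ({a, b, c} : Multiset α) = {a, c, b} :=
  congrArg (a ::ₘ ·) (Multiset.cons_swap b c 0)
lemma ms_rot (a b c : α) : ({a, b, c} : Multiset α) = {c, a, b} := by
  rw [ms_swap23, ms_swap12]
lemma ms_map {β : Type*} (f : α → β) (a b c : α) :
    ({a, b, c} : Multiset α).map f = {f a, f b, f c} := by
  simp only [Multiset.insert_eq_cons, Multiset.map_cons, Multiset.map_singleton]
lemma ms_card (a b c : α) : Multiset.card ({a, b, c} : Multiset α) = 3 := by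
  simp
lemma ms_mem {d a b c : α} : d ∈ ({a, b, c} : Multiset α) ↔ d = a ∨ d = b ∨ d = c := by
  simp only [Multiset.insert_eq_cons, Multiset.mem_cons, Multiset.mem_singleton]
lemma pair_eq {a b x y : α} :
    ({a, b} : Multiset α) = {x, y} → (a = x ∧ b = y) ∨ (a = y ∧ b = x) := by
  intro h
  rcases Multiset.cons_eq_cons.1 h with ⟨rfl, h2⟩ | ⟨hne, cs, h1, h2⟩
  · exact Or.inl ⟨rfl, Multiset.singleton_inj.1 h2⟩
  · rcases (Multiset.singleton_eq_cons_iff _).1 h1 with ⟨rfl, rfl⟩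
    rcases (Multiset.singleton_eq_cons_iff _).1 h2 with ⟨rfl, -⟩
    exact Or.inr ⟨rfl, rfl⟩
lemma triple_eq_cases {a b c x y z : α} (h : ({a, b, c} : Multiset α) = {x, y, z}) :
    (a = x ∧ b = y ∧ c = z) ∨ (a = x ∧ b = z ∧ c = y) ∨
    (a = y ∧ b = x ∧ c = z) ∨ (a = y ∧ b = z ∧ c = x) ∨
    (a = z ∧ b = x ∧ c = y) ∨ (a = z ∧ b = y ∧ c = x) := by
  rcases Multiset.cons_eq_cons.1 h with ⟨rfl, h2⟩ | ⟨hne, cs, h1, h2⟩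
  · rcases pair_eq h2 with ⟨rfl, rfl⟩ | ⟨rfl, rfl⟩
    · exact Or.inl ⟨rfl, rfl, rfl⟩
    · exact Or.inr (Or.inl ⟨rfl, rfl, rfl⟩)
  · have hcs : Multiset.card cs = 1 := by
      have := congrArg Multiset.card h1
      simp only [Multiset.insert_eq_cons, Multiset.card_cons, Multiset.card_singleton] at this
      omega
    rcases Multiset.card_eq_one.1 hcs with ⟨w, rfl⟩
    rcases pair_eq h1 with ⟨rfl, rfl⟩ | ⟨rfl, rfl⟩ <;>
      rcases pair_eq h2 with ⟨rfl, rfl⟩ | ⟨rfl, rfl⟩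
    · exact Or.inr (Or.inr (Or.inl ⟨rfl, rfl, rfl⟩))
    · exact Or.inr (Or.inr (Or.inr (Or.inr (Or.inl ⟨rfl, rfl, rfl⟩))))
    · exact Or.inr (Or.inr (Or.inr (Or.inl ⟨rfl, rfl, rfl⟩)))
    · exact Or.inr (Or.inr (Or.inr (Or.inr (Or.inr ⟨rfl, rfl, rfl⟩))))
end test

def invSetoid {X : Type*} (f : X → X) (hf : Function.Involutive f) : Setoid X where
  r a b := b = a ∨ b = f a
  iseqv := by
    refine ⟨fun a => Or.inl rfl, ?_, ?_⟩
    · rintro a b (rfl | rfl)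
      · exact Or.inl rfl
      · exact Or.inr (hf a).symm
    · rintro a b c (rfl | rfl) h
      · exact h
      · rcases h with rfl | rfl
        · exact Or.inr rfl
        · exact Or.inl (hf a)

section AbsCount
variable {A : Type*} (σ : A → A) (hσ : Function.Involutive σ)

/-- restriction of σ to non-fixed points -/
def nfMap : {a : A // σ a ≠ a} → {a : A // σ a ≠ a} :=
  fun a => ⟨σ a.1, fun h => a.2 (by conv_rhs => rw [← hσ a.1]; rw [h])⟩

lemma nfMap_invol : Function.Involutive (nfMap σ hσ) :=
  fun a => Subtype.ext (hσ a.1)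

include hσ in
lemma symMap_invol : Function.Involutive (Sym.map σ : Sym A 3 → Sym A 3) := by
  intro m
  rw [Sym.map_map]
  exact (Sym.map_congr (g := id) fun x _ => hσ x).trans (Sym.map_id m)

/-- structure of a σ-invariant 3-multiset containing a non-fixed point -/
lemma nonfix_struct (hs : Function.Involutive σ) {a b c : A}
    (h : ({a, b, c} : Multiset A).map σ = {a, b, c})
    (ha : σ a ≠ a) : ∃ x, σ x = x ∧ ({a, b, c} : Multiset A) = {x, a, σ a} := by
  rw [ms_map] at h
  rcases triple_eq_cases h with ⟨h1, h2, h3⟩ | ⟨h1, h2, h3⟩ | ⟨h1, h2, h3⟩ |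
    ⟨h1, h2, h3⟩ | ⟨h1, h2, h3⟩ | ⟨h1, h2, h3⟩
  · exact absurd h1 ha
  · exact absurd h1 ha
  · -- σa = b, σb = a, σc = c
    refine ⟨c, h3, ?_⟩
    rw [← h1, ms_rot]
  · -- σa = b, σb = c, σc = a : contradiction
    exfalso
    have hca : c = a := by rw [← h2, ← h1]; exact hs a
    subst hca
    exact ha h3
  · -- σa = c, σb = a, σc = b : contradiction
    exfalso
    have hb : b = σ a := by rw [← hs b, h2]
    have hca : σ c = a := by rw [← h1]; exact hs a
    rw [h3, hb] at hca
    exact ha hca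
  · -- σa = c, σb = b, σc = a
    refine ⟨b, h2, ?_⟩
    rw [← h1, ms_swap12]
end AbsCount

section FixCard
variable {A : Type*} (σ : A → A) (hσ : Function.Involutive σ)

/-- canonical invariant symmetric triple with a fixed point and a nonfixed pair -/
def gr0 (x : {a : A // σ a = a}) (a : {a : A // σ a ≠ a}) :
    {m : Sym A 3 // Sym.map σ m = m} :=
  ⟨⟨{x.1, a.1, σ a.1}, ms_card _ _ _⟩, by
    apply Subtype.ext
    show ({x.1, a.1, σ a.1} : Multiset A).map σ = ({x.1, a.1, σ a.1} : Multiset A)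
    rw [ms_map, x.2, hσ a.1, ms_swap23]⟩

include hσ in
lemma fix_card [Fintype A] :
    Nat.card {m : Sym A 3 // Sym.map σ m = m}
      = (Nat.card {a : A // σ a = a} + 2).choose 3
        + Nat.card {a : A // σ a = a}
          * Nat.card (Quotient (invSetoid (nfMap σ hσ) (nfMap_invol σ hσ))) := by
  classical
  have glpf : ∀ m0 : Sym {a : A // σ a = a} 3,
      Sym.map σ (Sym.map Subtype.val m0) = Sym.map Subtype.val m0 := by
    intro m0
    rw [Sym.map_map]
    exact Sym.map_congr fun x _ => x.2
  set g : Sym {a : A // σ a = a} 3 ⊕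
      ({a : A // σ a = a} × Quotient (invSetoid (nfMap σ hσ) (nfMap_invol σ hσ))) →
      {m : Sym A 3 // Sym.map σ m = m} :=
    Sum.elim (fun m0 => ⟨Sym.map Subtype.val m0, glpf m0⟩)
      (fun p => Quotient.lift (gr0 σ hσ p.1)
        (by
          rintro a b (rfl | rfl)
          · rfl
          · apply Subtype.ext
            apply Subtype.ext
            show ({p.1.1, a.1, σ a.1} : Multiset A)
              = {p.1.1, (nfMap σ hσ a).1, σ (nfMap σ hσ a).1}
            show ({p.1.1, a.1, σ a.1} : Multiset A) = {p.1.1, σ a.1, σ (σ a.1)}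
            rw [hσ a.1, ms_swap23]) p.2) with hg
  have hbij : Function.Bijective g := by
    constructor
    · rintro (m0 | ⟨x, q⟩) (m1 | ⟨x', q'⟩) h
      · simp only [hg, Sum.elim_inl] at h
        exact congrArg Sum.inl
          (Sym.map_injective Subtype.val_injective _ (congrArg Subtype.val h))
      · exfalso
        obtain ⟨a, rfl⟩ := q'.exists_rep
        simp only [hg, Sum.elim_inl, Sum.elim_inr, Quotient.lift_mk] at h
        have hm' := congrArg (fun u : {m : Sym A 3 // Sym.map σ m = m} =>
          (u.1 : Multiset A)) h
        simp only [Sym.coe_map] at hm'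
        have ha : a.1 ∈ Multiset.map Subtype.val (m0 : Multiset {a : A // σ a = a}) := by
          rw [hm']
          show a.1 ∈ ({x'.1, a.1, σ a.1} : Multiset A)
          exact ms_mem.2 (Or.inr (Or.inl rfl))
        rcases Multiset.mem_map.1 ha with ⟨y, _, hval⟩
        exact a.2 (hval ▸ y.2)
      · exfalso
        obtain ⟨a, rfl⟩ := q.exists_rep
        simp only [hg, Sum.elim_inl, Sum.elim_inr, Quotient.lift_mk] at h
        have hm' := congrArg (fun u : {m : Sym A 3 // Sym.map σ m = m} =>
          (u.1 : Multiset A)) h.symm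
        simp only [Sym.coe_map] at hm'
        have ha : a.1 ∈ Multiset.map Subtype.val (m1 : Multiset {a : A // σ a = a}) := by
          rw [hm']
          show a.1 ∈ ({x.1, a.1, σ a.1} : Multiset A)
          exact ms_mem.2 (Or.inr (Or.inl rfl))
        rcases Multiset.mem_map.1 ha with ⟨y, _, hval⟩
        exact a.2 (hval ▸ y.2)
      · obtain ⟨a, rfl⟩ := q.exists_rep
        obtain ⟨a', rfl⟩ := q'.exists_rep
        simp only [hg, Sum.elim_inr, Quotient.lift_mk] at h
        have hm' : ({x.1, a.1, σ a.1} : Multiset A) = {x'.1, a'.1, σ a'.1} :=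
          congrArg (fun u : {m : Sym A 3 // Sym.map σ m = m} => (u.1 : Multiset A)) h
        rcases triple_eq_cases hm' with ⟨h1, h2, h3⟩ | ⟨h1, h2, h3⟩ | ⟨h1, h2, h3⟩ |
          ⟨h1, h2, h3⟩ | ⟨h1, h2, h3⟩ | ⟨h1, h2, h3⟩
        · obtain rfl : x = x' := Subtype.ext h1
          obtain rfl : a = a' := Subtype.ext h2
          rfl
        · obtain rfl : x = x' := Subtype.ext h1
          have : a' = nfMap σ hσ a := Subtype.ext h3.symm
          exact congrArg Sum.inr (congrArg _ (Quotient.sound (Or.inr this)))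
        · exact absurd (h1 ▸ x.2) a'.2
        · exact absurd (h1 ▸ x.2) a'.2
        · exfalso
          have hx2 := x.2
          rw [h1, hσ] at hx2
          exact a'.2 hx2.symm
        · exfalso
          have hx2 := x.2
          rw [h1, hσ] at hx2
          exact a'.2 hx2.symm
    · rintro ⟨m, hm⟩
      obtain ⟨a, b, c, habc⟩ := Multiset.card_eq_three.1 m.2
      have hmap : (↑m : Multiset A).map σ = ↑m := by rw [← Sym.coe_map, hm]
      by_cases hall : σ a = a ∧ σ b = b ∧ σ c = c
      · refine ⟨Sum.inl ⟨{⟨a, hall.1⟩, ⟨b, hall.2.1⟩, ⟨c, hall.2.2⟩}, ms_card _ _ _⟩, ?_⟩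
        apply Subtype.ext
        apply Subtype.ext
        show Multiset.map (Subtype.val)
          ({⟨a, hall.1⟩, ⟨b, hall.2.1⟩, ⟨c, hall.2.2⟩} : Multiset {a : A // σ a = a})
            = (↑m : Multiset A)
        rw [ms_map]
        exact habc.symm
      · have key : ∃ (x d : A), σ x = x ∧ σ d ≠ d ∧ (↑m : Multiset A) = {x, d, σ d} := by
          by_cases ha : σ a = a
          · by_cases hb : σ b = b
            · have hc : σ c ≠ c := fun hc => hall ⟨ha, hb, hc⟩
              have h' : ({c, a, b} : Multiset A).map σ = {c, a, b} := by
                rw [← ms_rot, ← habc]; exact hmap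
              obtain ⟨x, hx, hEq⟩ := nonfix_struct σ hσ h' hc
              exact ⟨x, c, hx, hc, habc.trans ((ms_rot a b c).trans hEq)⟩
            · have h' : ({b, a, c} : Multiset A).map σ = {b, a, c} := by
                rw [← ms_swap12, ← habc]; exact hmap
              obtain ⟨x, hx, hEq⟩ := nonfix_struct σ hσ h' hb
              exact ⟨x, b, hx, hb, habc.trans ((ms_swap12 a b c).trans hEq)⟩
          · obtain ⟨x, hx, hEq⟩ := nonfix_struct σ hσ (by rw [← habc]; exact hmap) ha
            exact ⟨x, a, hx, ha, habc.trans hEq⟩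
        obtain ⟨x, d, hx, hd, hEq⟩ := key
        refine ⟨Sum.inr (⟨x, hx⟩, ⟦⟨d, hd⟩⟧), ?_⟩
        apply Subtype.ext
        apply Subtype.ext
        exact hEq.symm
  rw [← Nat.card_eq_of_bijective g hbij, Nat.card_sum, Nat.card_prod]
  congr 1
  rw [Nat.card_eq_fintype_card, Sym.card_sym_eq_choose, Nat.card_eq_fintype_card]
  have h32 : Fintype.card {a : A // σ a = a} + 3 - 1 = Fintype.card {a : A // σ a = a} + 2 := by
    omega
  rw [h32]
end FixCard

lemma invol_quot_card {X : Type*} [Fintype X] (f : X → X) (hf : Function.Involutive f) :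
    2 * Nat.card (Quotient (invSetoid f hf)) =
      Nat.card X + Nat.card {x : X // f x = x} := by
  classical
  letI S := invSetoid f hf
  have key : ∀ q : Quotient S,
      Fintype.card {x : X // Quotient.mk S x = q}
        + Fintype.card {x : {x : X // f x = x} // Quotient.mk S x.1 = q} = 2 := by
    refine Quotient.ind ?_
    intro x₀
    have hmem : ∀ x : X, Quotient.mk S x = Quotient.mk S x₀ ↔ (x = x₀ ∨ x = f x₀) := by
      intro x
      rw [Quotient.eq]
      constructor
      · rintro (rfl | rfl)
        · exact Or.inl rfl
        · exact Or.inr (hf x).symm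
      · rintro (rfl | rfl)
        · exact Or.inl rfl
        · exact Or.inr (hf x₀).symm
    by_cases hfx : f x₀ = x₀
    · have h1 : Fintype.card {x : X // Quotient.mk S x = Quotient.mk S x₀} = 1 := by
        rw [Fintype.card_eq_one_iff]
        refine ⟨⟨x₀, rfl⟩, ?_⟩
        rintro ⟨x, hx⟩
        rcases (hmem x).1 hx with rfl | rfl
        · rfl
        · exact Subtype.ext hfx
      have h2 : Fintype.card {x : {x : X // f x = x} // Quotient.mk S x.1 = Quotient.mk S x₀} = 1 := by
        rw [Fintype.card_eq_one_iff]
        refine ⟨⟨⟨x₀, hfx⟩, rfl⟩, ?_⟩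
        rintro ⟨⟨x, hx⟩, hq⟩
        rcases (hmem x).1 hq with rfl | rfl
        · rfl
        · exact Subtype.ext (Subtype.ext hfx)
      rw [h1, h2]
    · have h1 : Fintype.card {x : X // Quotient.mk S x = Quotient.mk S x₀} = 2 := by
        rw [← Nat.card_eq_fintype_card, Nat.card_eq_two_iff]
        refine ⟨⟨x₀, rfl⟩, ⟨f x₀, (hmem _).2 (Or.inr rfl)⟩, ?_, ?_⟩
        · intro h
          exact hfx (congrArg Subtype.val h).symm
        · ext ⟨x, hx⟩
          simp only [Set.mem_insert_iff, Set.mem_singleton_iff, Set.mem_univ, iff_true]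
          rcases (hmem x).1 hx with rfl | rfl
          · exact Or.inl rfl
          · exact Or.inr rfl
      have h2 : Fintype.card {x : {x : X // f x = x} // Quotient.mk S x.1 = Quotient.mk S x₀} = 0 := by
        rw [Fintype.card_eq_zero_iff]
        constructor
        rintro ⟨⟨x, hx⟩, hq⟩
        rcases (hmem x).1 hq with rfl | rfl
        · exact hfx hx
        · exact hfx (by rw [← hx, hf])
      rw [h1, h2]
  have hX : Fintype.card X = ∑ q : Quotient S, Fintype.card {x : X // Quotient.mk S x = q} := by
    rw [← Fintype.card_sigma]
    exact Fintype.card_congr (Equiv.sigmaFiberEquiv _).symm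
  have hFix : Fintype.card {x : X // f x = x}
      = ∑ q : Quotient S, Fintype.card {x : {x : X // f x = x} // Quotient.mk S x.1 = q} := by
    rw [← Fintype.card_sigma]
    exact Fintype.card_congr (Equiv.sigmaFiberEquiv (fun x : {x : X // f x = x} => Quotient.mk S x.1)).symm
  simp only [Nat.card_eq_fintype_card]
  rw [hX, hFix, ← Finset.sum_add_distrib]
  rw [Finset.sum_congr rfl (fun q _ => key q), Finset.sum_const, Finset.card_univ]
  ring

lemma card_set_eq {X : Type*} [Finite X] : Nat.card (Set X) = 2 ^ Nat.card X := by
  have : Nat.card (X → Prop) = Nat.card Prop ^ Nat.card X := Nat.card_fun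
  have hp : Nat.card Prop = 2 := by
    simp [Nat.card_eq_fintype_card]
  exact (hp ▸ this : _)

lemma card_superset {X : Type*} [Finite X] (T : Set X) :
    Nat.card {D : Set X // T ⊆ D} = 2 ^ Nat.card ↥(Tᶜ) := by
  rw [← card_set_eq]
  apply Nat.card_congr
  refine ⟨fun D => {x : ↥(Tᶜ) | x.1 ∈ D.1}, fun U => ⟨T ∪ (Subtype.val '' U), Set.subset_union_left⟩, ?_, ?_⟩
  · rintro ⟨D, hD⟩
    apply Subtype.ext
    ext x
    simp only [Set.mem_union, Set.mem_image, Set.mem_setOf_eq]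
    constructor
    · rintro (hx | ⟨y, hy, rfl⟩)
      · exact hD hx
      · exact hy
    · intro hx
      by_cases hT : x ∈ T
      · exact Or.inl hT
      · exact Or.inr ⟨⟨x, hT⟩, hx, rfl⟩
  · intro U
    ext ⟨x, hx⟩
    simp only [Set.mem_setOf_eq, Set.mem_union, Set.mem_image]
    constructor
    · rintro (hT | ⟨y, hy, hyx⟩)
      · exact absurd hT hx
      · obtain rfl : y = ⟨x, hx⟩ := Subtype.ext hyx
        exact hy
    · intro h
      exact Or.inr ⟨⟨x, hx⟩, h, rfl⟩

lemma six_choose_three (N : ℕ) : 6 * (N + 2).choose 3 = N * (N + 1) * (N + 2) := by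
  rw [Nat.choose_eq_descFactorial_div_factorial]
  have hd : (N + 2).descFactorial 3 = N * ((N + 1) * ((N + 2) * 1)) := by
    simp [Nat.descFactorial_succ, Nat.descFactorial]
  have : (6 : ℕ) = Nat.factorial 3 := rfl
  rw [this, Nat.mul_div_cancel' (Nat.factorial_dvd_descFactorial _ _), hd]
  ring


section SymQ
variable {A : Type*} (σ : A → A) (hσ : Function.Involutive σ)

include hσ in
lemma card_split [Fintype A] :
    Fintype.card A = Nat.card {a : A // σ a = a} + Nat.card {a : A // σ a ≠ a} := by
  classical
  have h1 : Nat.card {a : A // σ a ≠ a} = Fintype.card {x : A // ¬ σ x = x} :=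
    Nat.card_eq_fintype_card
  have h2 : Nat.card {a : A // σ a = a} = Fintype.card {x : A // σ x = x} :=
    Nat.card_eq_fintype_card
  have h3 := Fintype.card_subtype_compl (fun a : A => σ a = a)
  have h4 := Fintype.card_subtype_le (fun a : A => σ a = a)
  omega

include hσ in
lemma card_symq [Fintype A] :
    12 * Nat.card (Quotient (invSetoid (Sym.map σ : Sym A 3 → Sym A 3) (symMap_invol σ hσ)))
      = Fintype.card A * (Fintype.card A + 1) * (Fintype.card A + 2)
        + Nat.card {a : A // σ a = a} * (Nat.card {a : A // σ a = a} + 1)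
            * (Nat.card {a : A // σ a = a} + 2)
        + 3 * Nat.card {a : A // σ a = a} * Nat.card {a : A // σ a ≠ a} := by
  classical
  have h2qs := invol_quot_card (Sym.map σ : Sym A 3 → Sym A 3) (symMap_invol σ hσ)
  have hsym : Nat.card (Sym A 3) = (Fintype.card A + 2).choose 3 := by
    rw [Nat.card_eq_fintype_card, Sym.card_sym_eq_choose]
    have : Fintype.card A + 3 - 1 = Fintype.card A + 2 := by omega
    rw [this]
  have hfix := fix_card σ hσ
  have h2qnf := invol_quot_card (nfMap σ hσ) (nfMap_invol σ hσ)
  have hnf0 : Nat.card {x : {a : A // σ a ≠ a} // nfMap σ hσ x = x} = 0 := by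
    have : IsEmpty {x : {a : A // σ a ≠ a} // nfMap σ hσ x = x} :=
      ⟨fun ⟨x, hx⟩ => x.2 (congrArg Subtype.val hx)⟩
    exact Nat.card_of_isEmpty
  rw [hsym, hfix] at h2qs
  rw [hnf0, Nat.add_zero] at h2qnf
  have e1 := six_choose_three (Fintype.card A)
  have e2 := six_choose_three (Nat.card {a : A // σ a = a})
  have e3 : 6 * (Nat.card {a : A // σ a = a}
        * Nat.card (Quotient (invSetoid (nfMap σ hσ) (nfMap_invol σ hσ))))
      = 3 * Nat.card {a : A // σ a = a} * Nat.card {a : A // σ a ≠ a} := by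
    rw [← h2qnf]; ring
  linarith

end SymQ

section Frames
variable {K : Type*} (z0 : K) (s : K → K) (hz : s z0 = z0) (hinv : ∀ x, s (s x) = x)

def sA : {x : K // x ≠ z0} → {x : K // x ≠ z0} :=
  fun a => ⟨s a.1, fun h => a.2 (by rw [← hinv a.1, h, hz])⟩

lemma sA_invol : Function.Involutive (sA z0 s hz hinv) := fun a => Subtype.ext (hinv a.1)

def mk3 (a b c : {x : K // x ≠ z0}) : Sym {x : K // x ≠ z0} 3 := ⟨{a, b, c}, ms_card a b c⟩

lemma mk3_map (a b c : {x : K // x ≠ z0}) :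
    Sym.map (sA z0 s hz hinv) (mk3 z0 a b c)
      = mk3 z0 (sA z0 s hz hinv a) (sA z0 s hz hinv b) (sA z0 s hz hinv c) :=
  Subtype.ext (ms_map _ a b c)

def phiS (a b c : K) : Prop :=
  (a = z0 ∧ b = s c) ∨ (b = z0 ∧ a = s c) ∨ (c = z0 ∧ a = s b)

/-- the symmetric function associated to a set of orbits -/
def SD (D : Set (Quotient (invSetoid (Sym.map (sA z0 s hz hinv))
    (symMap_invol _ (sA_invol z0 s hz hinv))))) (a b c : K) : Prop :=
  (∃ (ha : a ≠ z0) (hb : b ≠ z0) (hc : c ≠ z0),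
    ⟦mk3 z0 ⟨a, ha⟩ ⟨b, hb⟩ ⟨c, hc⟩⟧ ∈ D) ∨
  ((a = z0 ∨ b = z0 ∨ c = z0) ∧ phiS z0 s a b c)

variable {z0 s}

include hinv in
lemma eqs {a b : K} : a = s b ↔ b = s a :=
  ⟨fun h => by rw [h, hinv], fun h => by rw [h, hinv]⟩

include hz hinv in
lemma sz {a : K} : s a = z0 ↔ a = z0 :=
  ⟨fun h => by rw [← hinv a, h, hz], fun h => by rw [h, hz]⟩

include hinv in
lemma sinj {a b : K} : s a = s b ↔ a = b :=
  ⟨fun h => by rw [← hinv a, h, hinv], fun h => by rw [h]⟩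

include hinv in
lemma phiS_swap12 {a b c : K} : phiS z0 s a b c ↔ phiS z0 s b a c := by
  unfold phiS
  constructor
  · rintro (⟨h1, h2⟩ | ⟨h1, h2⟩ | ⟨h1, h2⟩)
    · exact Or.inr (Or.inl ⟨h1, h2⟩)
    · exact Or.inl ⟨h1, h2⟩
    · exact Or.inr (Or.inr ⟨h1, (eqs hinv).1 h2⟩)
  · rintro (⟨h1, h2⟩ | ⟨h1, h2⟩ | ⟨h1, h2⟩)
    · exact Or.inr (Or.inl ⟨h1, h2⟩)
    · exact Or.inl ⟨h1, h2⟩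
    · exact Or.inr (Or.inr ⟨h1, (eqs hinv).1 h2⟩)

include hinv in
lemma phiS_rot {a b c : K} : phiS z0 s a b c ↔ phiS z0 s b c a := by
  unfold phiS
  constructor
  · rintro (⟨h1, h2⟩ | ⟨h1, h2⟩ | ⟨h1, h2⟩)
    · exact Or.inr (Or.inr ⟨h1, h2⟩)
    · exact Or.inl ⟨h1, (eqs hinv).1 h2⟩
    · exact Or.inr (Or.inl ⟨h1, (eqs hinv).1 h2⟩)
  · rintro (⟨h1, h2⟩ | ⟨h1, h2⟩ | ⟨h1, h2⟩)
    · exact Or.inr (Or.inl ⟨h1, (eqs hinv).1 h2⟩)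
    · exact Or.inr (Or.inr ⟨h1, (eqs hinv).1 h2⟩)
    · exact Or.inl ⟨h1, h2⟩

include hz hinv in
lemma phiS_star {a b c : K} : phiS z0 s a b c ↔ phiS z0 s (s a) (s b) (s c) := by
  unfold phiS
  rw [sz hz hinv, sz hz hinv, sz hz hinv]
  constructor
  · rintro (⟨h1, h2⟩ | ⟨h1, h2⟩ | ⟨h1, h2⟩)
    · exact Or.inl ⟨h1, by rw [h2]⟩
    · exact Or.inr (Or.inl ⟨h1, by rw [h2]⟩)
    · exact Or.inr (Or.inr ⟨h1, by rw [h2]⟩)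
  · rintro (⟨h1, h2⟩ | ⟨h1, h2⟩ | ⟨h1, h2⟩)
    · exact Or.inl ⟨h1, (sinj hinv).1 h2⟩
    · exact Or.inr (Or.inl ⟨h1, (sinj hinv).1 h2⟩)
    · exact Or.inr (Or.inr ⟨h1, (sinj hinv).1 h2⟩)
end Frames

section Frames2
variable {K : Type*} {z0 : K} {s : K → K} (hz : s z0 = z0) (hinv : ∀ x, s (s x) = x)

include hz hinv

lemma SD_swap12_mp {D} {a b c : K} :
    SD z0 s hz hinv D a b c → SD z0 s hz hinv D b a c := by
  rintro (⟨ha, hb, hc, hm⟩ | ⟨hz', hphi⟩)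
  · refine Or.inl ⟨hb, ha, hc, ?_⟩
    rw [show mk3 z0 (⟨b, hb⟩ : {x : K // x ≠ z0}) ⟨a, ha⟩ ⟨c, hc⟩
      = mk3 z0 ⟨a, ha⟩ ⟨b, hb⟩ ⟨c, hc⟩ from Subtype.ext (ms_swap12 _ _ _)]
    exact hm
  · exact Or.inr ⟨by tauto, (phiS_swap12 hinv).1 hphi⟩

lemma SD_swap12 {D} {a b c : K} :
    SD z0 s hz hinv D a b c ↔ SD z0 s hz hinv D b a c :=
  ⟨SD_swap12_mp hz hinv, SD_swap12_mp hz hinv⟩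

lemma SD_rot_mp {D} {a b c : K} :
    SD z0 s hz hinv D a b c → SD z0 s hz hinv D b c a := by
  rintro (⟨ha, hb, hc, hm⟩ | ⟨hz', hphi⟩)
  · refine Or.inl ⟨hb, hc, ha, ?_⟩
    rw [show mk3 z0 (⟨b, hb⟩ : {x : K // x ≠ z0}) ⟨c, hc⟩ ⟨a, ha⟩
      = mk3 z0 ⟨a, ha⟩ ⟨b, hb⟩ ⟨c, hc⟩ from Subtype.ext (ms_rot _ _ _)]
    exact hm
  · exact Or.inr ⟨by tauto, (phiS_rot hinv).1 hphi⟩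

lemma SD_rot {D} {a b c : K} :
    SD z0 s hz hinv D a b c ↔ SD z0 s hz hinv D b c a :=
  ⟨SD_rot_mp hz hinv, fun h => SD_rot_mp hz hinv (SD_rot_mp hz hinv h)⟩

lemma SD_star_mp {D} {a b c : K} :
    SD z0 s hz hinv D a b c → SD z0 s hz hinv D (s a) (s b) (s c) := by
  rintro (⟨ha, hb, hc, hm⟩ | ⟨hz', hphi⟩)
  · refine Or.inl ⟨fun h => ha ((sz hz hinv).1 h), fun h => hb ((sz hz hinv).1 h),
      fun h => hc ((sz hz hinv).1 h), ?_⟩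
    have heq : (⟦mk3 z0 (⟨a, ha⟩ : {x : K // x ≠ z0}) ⟨b, hb⟩ ⟨c, hc⟩⟧ :
        Quotient (invSetoid (Sym.map (sA z0 s hz hinv))
          (symMap_invol _ (sA_invol z0 s hz hinv))))
        = ⟦mk3 z0 (sA z0 s hz hinv ⟨a, ha⟩) (sA z0 s hz hinv ⟨b, hb⟩)
            (sA z0 s hz hinv ⟨c, hc⟩)⟧ :=
      Quotient.sound (Or.inr (mk3_map z0 s hz hinv _ _ _).symm)
    have hm2 : ⟦mk3 z0 (sA z0 s hz hinv ⟨a, ha⟩) (sA z0 s hz hinv ⟨b, hb⟩)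
        (sA z0 s hz hinv ⟨c, hc⟩)⟧ ∈ D := by rw [← heq]; exact hm
    exact hm2
  · refine Or.inr ⟨?_, (phiS_star hz hinv).1 hphi⟩
    rcases hz' with h | h | h
    · exact Or.inl ((sz hz hinv).2 h)
    · exact Or.inr (Or.inl ((sz hz hinv).2 h))
    · exact Or.inr (Or.inr ((sz hz hinv).2 h))

lemma SD_star {D} {a b c : K} :
    SD z0 s hz hinv D a b c ↔ SD z0 s hz hinv D (s a) (s b) (s c) :=
  ⟨SD_star_mp hz hinv, fun h => by
    have := SD_star_mp hz hinv h
    rwa [hinv, hinv, hinv] at this⟩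

lemma SD_mid {D} {a c : K} : SD z0 s hz hinv D a z0 c ↔ a = s c := by
  unfold SD
  constructor
  · rintro (⟨ha, hb, hc, hm⟩ | ⟨hz', hphi⟩)
    · exact absurd rfl hb
    · rcases hphi with ⟨h1, h2⟩ | ⟨h1, h2⟩ | ⟨h1, h2⟩
      · exact h1.trans h2
      · exact h2
      · rw [h1]; exact h2
  · intro h
    exact Or.inr ⟨Or.inr (Or.inl rfl), Or.inr (Or.inl ⟨rfl, h⟩)⟩

end Frames2

section Frames3
variable {K : Type*} {z0 : K} {s : K → K} (hz : s z0 = z0) (hinv : ∀ x, s (s x) = x)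

def toRel (D : Set (Quotient (invSetoid (Sym.map (sA z0 s hz hinv))
    (symMap_invol _ (sA_invol z0 s hz hinv))))) (x y z : K) : Prop :=
  SD z0 s hz hinv D x y (s z)

include hz hinv

lemma toRel_conds (D) : CommNAConds (toRel hz hinv D) s z0 := by
  refine ⟨?_, ?_, ?_, ?_, ?_, ?_, hinv, ?_⟩
  · intro x y z h
    show SD z0 s hz hinv D y (s z) (s (s x))
    rw [hinv]
    exact SD_rot_mp hz hinv h
  · intro x y z h
    show SD z0 s hz hinv D (s z) x (s (s y))
    rw [hinv]
    exact SD_rot_mp hz hinv (SD_rot_mp hz hinv h)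
  · intro x y z h
    show SD z0 s hz hinv D (s y) (s x) (s (s z))
    exact SD_swap12_mp hz hinv (SD_star_mp hz hinv h)
  · intro x y z h
    have h1 := SD_star_mp hz hinv h
    rw [hinv] at h1
    exact SD_swap12_mp hz hinv (SD_rot_mp hz hinv (SD_rot_mp hz hinv h1))
  · intro x y z h
    have h1 := SD_star_mp hz hinv h
    rw [hinv] at h1
    exact SD_swap12_mp hz hinv (SD_rot_mp hz hinv h1)
  · intro x y
    constructor
    · rintro rfl
      exact ⟨z0, rfl, (SD_mid hz hinv).2 (by rw [hinv])⟩
    · rintro ⟨u, hu, h⟩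
      have hu' : u = z0 := hu
      subst hu'
      have := (SD_mid hz hinv).1 h
      rwa [hinv] at this
  · intro x y z
    exact ⟨SD_swap12_mp hz hinv, SD_swap12_mp hz hinv⟩

lemma toRel_mem {D} (a b c : {x : K // x ≠ z0}) :
    toRel hz hinv D a.1 b.1 (s c.1) ↔ ⟦mk3 z0 a b c⟧ ∈ D := by
  unfold toRel
  rw [hinv c.1]
  constructor
  · rintro (⟨ha, hb, hc, hm⟩ | ⟨hz', hphi⟩)
    · exact hm
    · rcases hz' with h | h | h
      · exact absurd h a.2
      · exact absurd h b.2
      · exact absurd h c.2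
  · intro h
    exact Or.inl ⟨a.2, b.2, c.2, h⟩

lemma toRel_dense (D) : (∀ x, toRel hz hinv D x x x) ↔
    ∀ a : {x : K // x ≠ z0}, ⟦mk3 z0 a a (sA z0 s hz hinv a)⟧ ∈ D := by
  constructor
  · intro h a
    have h2 : toRel hz hinv D a.1 a.1 (s ((sA z0 s hz hinv a)).1) = toRel hz hinv D a.1 a.1 a.1 := by
      show toRel hz hinv D a.1 a.1 (s (s a.1)) = _
      rw [hinv]
    exact (toRel_mem hz hinv a a _).1 (h2.symm ▸ h a.1)
  · intro h x
    show SD z0 s hz hinv D x x (s x)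
    by_cases hx : x = z0
    · subst hx
      exact Or.inr ⟨Or.inl rfl, Or.inl ⟨rfl, by rw [hz, hz]⟩⟩
    · refine Or.inl ⟨hx, hx, fun hc => hx ((sz hz hinv).1 hc), ?_⟩
      exact h ⟨x, hx⟩

lemma toRel_inj : Function.Injective (toRel hz hinv) := by
  intro D D' hDD
  ext q
  obtain ⟨m, rfl⟩ := q.exists_rep
  obtain ⟨a, b, c, hM⟩ := Multiset.card_eq_three.1 m.2
  have hmm : m = mk3 z0 a b c := Subtype.ext hM
  rw [hmm, ← toRel_mem hz hinv a b c, hDD, toRel_mem hz hinv a b c]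

lemma toRel_surj (R : K → K → K → Prop) (hR : CommNAConds R s z0) :
    toRel hz hinv {q | ∃ a b c : {x : K // x ≠ z0},
      ⟦mk3 z0 a b c⟧ = q ∧ R a.1 b.1 (s c.1)} = R := by
  obtain ⟨lr, rr, cr, lf, rf, idt, -, comm⟩ := hR
  have idt' : ∀ x y, R x z0 y ↔ x = y := by
    intro x y
    constructor
    · intro h
      exact (idt x y).2 ⟨z0, rfl, h⟩
    · intro h
      rcases (idt x y).1 h with ⟨u, hu, hRu⟩
      have hu' : u = z0 := hu
      subst hu'
      exact hRu
  have cyc : ∀ a b c, R a b (s c) → R b c (s a) := by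
    intro a b c h
    have := lr a b (s c) h
    rwa [hinv] at this
  have sw : ∀ a b c : K, R a b (s c) → R b a (s c) := fun a b c h => (comm a b (s c)).1 h
  have st : ∀ a b c, R a b (s c) → R (s a) (s b) (s (s c)) := by
    intro a b c h
    exact (comm _ _ _).1 (cr a b (s c) h)
  have Z1 : ∀ y z, R z0 y z ↔ y = z := fun y z => (comm z0 y z).trans (idt' y z)
  have Z2 : ∀ x y, R x y z0 ↔ x = s y := by
    intro x y
    constructor
    · intro h
      have h1 := lr x y z0 h
      rw [hz] at h1
      exact (eqs hinv).1 ((idt' _ _).1 h1)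
    · intro h
      have h1 : R y z0 (s x) := (idt' _ _).2 ((eqs hinv).1 h)
      have h2 := rr y z0 (s x) h1
      rwa [hinv, hz] at h2
  have perm : ∀ a b c a' b' c' : {x : K // x ≠ z0},
      ({a, b, c} : Multiset {x : K // x ≠ z0}) = {a', b', c'} →
        R a'.1 b'.1 (s c'.1) → R a.1 b.1 (s c.1) := by
    intro a b c a' b' c' hM h
    rcases triple_eq_cases hM with ⟨h1, h2, h3⟩ | ⟨h1, h2, h3⟩ | ⟨h1, h2, h3⟩ |
      ⟨h1, h2, h3⟩ | ⟨h1, h2, h3⟩ | ⟨h1, h2, h3⟩ <;> subst h1 <;> subst h2 <;> subst h3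
    · exact h
    · exact sw _ _ _ (cyc _ _ _ (cyc _ _ _ h))
    · exact sw _ _ _ h
    · exact cyc _ _ _ h
    · exact cyc _ _ _ (cyc _ _ _ h)
    · exact sw _ _ _ (cyc _ _ _ h)
  funext x y z
  apply propext
  show SD z0 s hz hinv _ x y (s z) ↔ R x y z
  by_cases hx : x = z0
  · subst hx
    rw [SD_swap12 hz hinv, SD_mid hz hinv, hinv]
    exact (Z1 y z).symm
  by_cases hy : y = z0
  · subst hy
    rw [SD_mid hz hinv, hinv]
    exact (idt' x z).symm
  by_cases hzz : z = z0
  · subst hzz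
    rw [hz, SD_rot hz hinv, SD_mid hz hinv]
    exact ⟨fun h => (Z2 x y).2 ((eqs hinv).1 h), fun h => (eqs hinv).1 ((Z2 x y).1 h)⟩
  · have hsz : s z ≠ z0 := fun h => hzz ((sz hz hinv).1 h)
    constructor
    · rintro (⟨ha, hb, hc, hm⟩ | ⟨hz', hphi⟩)
      · obtain ⟨a', b', c', hq, hR'⟩ := hm
        rcases Quotient.exact hq with heq | heq
        · have hM : ({⟨x, ha⟩, ⟨y, hb⟩, ⟨s z, hc⟩} : Multiset {x : K // x ≠ z0})
              = {a', b', c'} := congrArg Subtype.val heq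
          have := perm _ _ _ _ _ _ hM hR'
          rwa [hinv] at this
        · have hM : ({⟨x, ha⟩, ⟨y, hb⟩, ⟨s z, hc⟩} : Multiset {x : K // x ≠ z0})
              = {sA z0 s hz hinv a', sA z0 s hz hinv b', sA z0 s hz hinv c'} :=
            congrArg Subtype.val (heq.trans (mk3_map z0 s hz hinv a' b' c'))
          have hR'' : R (sA z0 s hz hinv a').1 (sA z0 s hz hinv b').1
              (s (sA z0 s hz hinv c').1) := st _ _ _ hR'
          have := perm _ _ _ _ _ _ hM hR''
          rwa [hinv] at this
      · rcases hz' with h | h | h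
        · exact absurd h hx
        · exact absurd h hy
        · exact absurd h hsz
    · intro h
      refine Or.inl ⟨hx, hy, hsz, ⟨⟨x, hx⟩, ⟨y, hy⟩, ⟨s z, hsz⟩, rfl, ?_⟩⟩
      show R x y (s (s z))
      rwa [hinv]

end Frames3

section Frames4
variable {K : Type*} {z0 : K} {s : K → K} (hz : s z0 = z0) (hinv : ∀ x, s (s x) = x)

include hz hinv in
lemma dd_card :
    Nat.card (Quotient (invSetoid (sA z0 s hz hinv) (sA_invol z0 s hz hinv)))
      = Nat.card ↥(Set.range (fun a : {x : K // x ≠ z0} =>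
          (⟦mk3 z0 a a (sA z0 s hz hinv a)⟧ : Quotient (invSetoid (Sym.map (sA z0 s hz hinv))
            (symMap_invol _ (sA_invol z0 s hz hinv)))))) := by
  have wd : ∀ a b : {x : K // x ≠ z0},
      (invSetoid (sA z0 s hz hinv) (sA_invol z0 s hz hinv)).r a b →
      (⟦mk3 z0 a a (sA z0 s hz hinv a)⟧ : Quotient (invSetoid (Sym.map (sA z0 s hz hinv))
            (symMap_invol _ (sA_invol z0 s hz hinv))))
        = ⟦mk3 z0 b b (sA z0 s hz hinv b)⟧ := by
    rintro a b (rfl | rfl)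
    · rfl
    · exact Quotient.sound (Or.inr (mk3_map z0 s hz hinv a a (sA z0 s hz hinv a)).symm)
  apply Nat.card_eq_of_bijective (fun q => Quotient.lift
    (fun a : {x : K // x ≠ z0} =>
      (⟨⟦mk3 z0 a a (sA z0 s hz hinv a)⟧, Set.mem_range_self a⟩ :
        ↥(Set.range (fun a : {x : K // x ≠ z0} =>
          (⟦mk3 z0 a a (sA z0 s hz hinv a)⟧ : Quotient (invSetoid (Sym.map (sA z0 s hz hinv))
            (symMap_invol _ (sA_invol z0 s hz hinv))))))))
    (fun a b h => Subtype.ext (wd a b h)) q)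
  constructor
  · intro q q' h
    obtain ⟨a, rfl⟩ := q.exists_rep
    obtain ⟨a', rfl⟩ := q'.exists_rep
    have h2 : (⟦mk3 z0 a a (sA z0 s hz hinv a)⟧ : Quotient (invSetoid (Sym.map (sA z0 s hz hinv))
            (symMap_invol _ (sA_invol z0 s hz hinv))))
        = ⟦mk3 z0 a' a' (sA z0 s hz hinv a')⟧ := congrArg Subtype.val h
    apply Quotient.sound
    rcases Quotient.exact h2 with heq | heq
    · have hM := congrArg Subtype.val heq
      rcases triple_eq_cases hM with p | p | p | p | p | p
      all_goals first
        | exact Or.inl p.1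
        | exact Or.inr p.1
        | exact Or.inl (p.1.trans (sA_invol z0 s hz hinv a))
    · have hM := congrArg Subtype.val
        (heq.trans (mk3_map z0 s hz hinv a a (sA z0 s hz hinv a)))
      rcases triple_eq_cases hM with p | p | p | p | p | p
      all_goals first
        | exact Or.inr p.1
        | exact Or.inl (p.1.trans (sA_invol z0 s hz hinv a))
  · rintro ⟨q, a, rfl⟩
    exact ⟨⟦a⟧, rfl⟩

include hz hinv in
lemma fixed_card [Finite K] :
    Nat.card {x : K // s x = x}
      = Nat.card {a : {x : K // x ≠ z0} // sA z0 s hz hinv a = a} + 1 := by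
  have hbij : Function.Bijective
      (Sum.elim (fun a : {a : {x : K // x ≠ z0} // sA z0 s hz hinv a = a} =>
          (⟨a.1.1, congrArg Subtype.val a.2⟩ : {x : K // s x = x}))
        (fun _ : Unit => (⟨z0, hz⟩ : {x : K // s x = x}))) := by
    constructor
    · rintro (a | ⟨⟩) (b | ⟨⟩) h
      · exact congrArg Sum.inl (Subtype.ext (Subtype.ext
          (congrArg (fun u : {x : K // s x = x} => u.1) h)))
      · exact absurd (congrArg (fun u : {x : K // s x = x} => u.1) h) a.1.2
      · exact absurd (congrArg (fun u : {x : K // s x = x} => u.1) h.symm) b.1.2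
      · rfl
    · rintro ⟨x, hx⟩
      by_cases hxz : x = z0
      · exact ⟨Sum.inr Unit.unit, Subtype.ext hxz.symm⟩
      · exact ⟨Sum.inl ⟨⟨x, hxz⟩, Subtype.ext hx⟩, rfl⟩
  rw [← Nat.card_eq_of_bijective _ hbij, Nat.card_sum]
  congr 1
  exact Nat.card_unique

end Frames4

/-- Theorem 27(i), commutative cases: on an `n`-element set `K` with base
point `0`, an involution `⋆` fixing `0`, and `s` elements fixed by `⋆`, the
number of ternary relations `R` making `(K, R, ⋆, {0})` a commutative NA-frame
is `2^F(n,s)` with `F(n,s) = (s−1)s(s+1)/6 + (n−s)(n−s+1)(n−s+2)/12 +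
(s−1)(n−s)(n+2)/4`, and the number making it also dense is `2^G(n,s)` with
`G(n,s) = (s−1)(s−2)(s+3)/6 + (n−s)(n−s−1)(n−s+4)/12 + (s−1)(n−s)(n+2)/4`
(the exponents being characterized here by `12·F` and `12·G`). -/
theorem count_comm_NA_frames {K : Type*} [Fintype K] (z0 : K) (s : K → K)
    (hz : s z0 = z0) (hinv : ∀ x, s (s x) = x)
    (n sk : ℕ) (hn : Fintype.card K = n)
    (hsk : Nat.card {x : K // s x = x} = sk)
    (F G : ℕ)
    (hF : 12 * F = 2 * ((sk - 1) * sk * (sk + 1)) +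
      (n - sk) * (n - sk + 1) * (n - sk + 2) +
      3 * ((sk - 1) * (n - sk) * (n + 2)))
    (hG : 12 * G = 2 * ((sk - 1) * (sk - 2) * (sk + 3)) +
      (n - sk) * (n - sk - 1) * (n - sk + 4) +
      3 * ((sk - 1) * (n - sk) * (n + 2))) :
    Nat.card {R : K → K → K → Prop // CommNAConds R s z0} = 2 ^ F ∧
    Nat.card {R : K → K → K → Prop //
        CommNAConds R s z0 ∧ ∀ x, R x x x} = 2 ^ G := by
  classical
  obtain ⟨t, hT⟩ : ∃ t, Nat.card {a : {x : K // x ≠ z0} // sA z0 s hz hinv a = a} = t :=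
    ⟨_, rfl⟩
  obtain ⟨mm, hMM⟩ : ∃ m, Nat.card {a : {x : K // x ≠ z0} // sA z0 s hz hinv a ≠ a} = m :=
    ⟨_, rfl⟩
  obtain ⟨qs, hQS⟩ : ∃ q, Nat.card (Quotient (invSetoid (Sym.map (sA z0 s hz hinv))
    (symMap_invol _ (sA_invol z0 s hz hinv)))) = q := ⟨_, rfl⟩
  obtain ⟨qa, hQA⟩ : ∃ q, Nat.card (Quotient (invSetoid (sA z0 s hz hinv)
    (sA_invol z0 s hz hinv))) = q := ⟨_, rfl⟩
  have hsplit := card_split (sA z0 s hz hinv) (sA_invol z0 s hz hinv)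
  rw [hT, hMM] at hsplit
  have hskt : sk = t + 1 := by rw [← hsk, fixed_card hz hinv, hT]
  have hbij2 : Function.Bijective
      (Sum.elim (Subtype.val : {x : K // x ≠ z0} → K) (fun _ : Unit => z0)) := by
    constructor
    · rintro (a | ⟨⟩) (b | ⟨⟩) h
      · exact congrArg Sum.inl (Subtype.ext h)
      · exact absurd h a.2
      · exact absurd h.symm b.2
      · rfl
    · intro x
      by_cases hxz : x = z0
      · exact ⟨Sum.inr Unit.unit, hxz.symm⟩
      · exact ⟨Sum.inl ⟨x, hxz⟩, rfl⟩
  have hNn : Nat.card {x : K // x ≠ z0} + 1 = n := by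
    have hu : Nat.card Unit = 1 := Nat.card_unique
    rw [← hn, ← Nat.card_eq_fintype_card (α := K), ← Nat.card_eq_of_bijective _ hbij2,
      Nat.card_sum, hu]
  have hNA : Nat.card {x : K // x ≠ z0} = t + mm := by
    rw [Nat.card_eq_fintype_card, hsplit]
  have hq12 := card_symq (sA z0 s hz hinv) (sA_invol z0 s hz hinv)
  rw [hQS, hT, hMM, hsplit] at hq12
  have h2qa := invol_quot_card (sA z0 s hz hinv) (sA_invol z0 s hz hinv)
  rw [hQA, hNA, hT] at h2qa
  have hntm : n = t + mm + 1 := by omega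
  -- F part
  have hbF : Function.Bijective (fun D : Set (Quotient (invSetoid (Sym.map (sA z0 s hz hinv))
      (symMap_invol _ (sA_invol z0 s hz hinv)))) =>
      (⟨toRel hz hinv D, toRel_conds hz hinv D⟩ :
        {R : K → K → K → Prop // CommNAConds R s z0})) := by
    constructor
    · intro D D' h
      exact toRel_inj hz hinv (congrArg Subtype.val h)
    · rintro ⟨R, hR⟩
      exact ⟨_, Subtype.ext (toRel_surj hz hinv R hR)⟩
  have hcardF : Nat.card {R : K → K → K → Prop // CommNAConds R s z0} = 2 ^ qs := by
    rw [← Nat.card_eq_of_bijective _ hbF, card_set_eq, hQS]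
  have hFeq : F = qs := by
    have e1 : sk - 1 = t := by omega
    have e2 : n - sk = mm := by omega
    have e3 : n + 2 = t + mm + 3 := by omega
    rw [e1, e2, e3, hskt] at hF
    have h12 : 12 * F = 12 * qs := by
      rw [hF, hq12]
      ring
    omega
  -- G part
  set Dd : Set (Quotient (invSetoid (Sym.map (sA z0 s hz hinv))
      (symMap_invol _ (sA_invol z0 s hz hinv)))) :=
    Set.range (fun a : {x : K // x ≠ z0} => ⟦mk3 z0 a a (sA z0 s hz hinv a)⟧) with hDdd
  have hbG : Function.Bijective (fun D : {D : Set (Quotient (invSetoid (Sym.map (sA z0 s hz hinv))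
      (symMap_invol _ (sA_invol z0 s hz hinv)))) // Dd ⊆ D} =>
      (⟨toRel hz hinv D.1, toRel_conds hz hinv D.1,
          (toRel_dense hz hinv D.1).2 (fun a => D.2 ⟨a, rfl⟩)⟩ :
        {R : K → K → K → Prop // CommNAConds R s z0 ∧ ∀ x, R x x x})) := by
    constructor
    · intro D D' h
      exact Subtype.ext (toRel_inj hz hinv (congrArg Subtype.val h))
    · rintro ⟨R, hRc, hRd⟩
      have hst : toRel hz hinv {q | ∃ a b c : {x : K // x ≠ z0},
          ⟦mk3 z0 a b c⟧ = q ∧ R a.1 b.1 (s c.1)} = R := toRel_surj hz hinv R hRc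
      have hsub : Dd ⊆ {q | ∃ a b c : {x : K // x ≠ z0},
          ⟦mk3 z0 a b c⟧ = q ∧ R a.1 b.1 (s c.1)} := by
        rintro q ⟨a, rfl⟩
        exact (toRel_dense hz hinv _).1 (by rw [hst]; exact hRd) a
      exact ⟨⟨_, hsub⟩, Subtype.ext hst⟩
  have hcardG : Nat.card {R : K → K → K → Prop // CommNAConds R s z0 ∧ ∀ x, R x x x}
      = 2 ^ Nat.card ↥(Ddᶜ) := by
    rw [← Nat.card_eq_of_bijective _ hbG, card_superset Dd]
  have hdd : Nat.card ↥Dd = qa := by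
    rw [← hQA]
    exact (dd_card hz hinv).symm
  have hcompl : Nat.card ↥Dd + Nat.card ↥(Ddᶜ) = qs := by
    rw [← hQS, Nat.card_coe_set_eq, Nat.card_coe_set_eq]
    exact Set.ncard_add_ncard_compl Dd (Set.toFinite Dd)
  clear hbG hDdd
  clear_value Dd
  obtain ⟨dc, hdc⟩ : ∃ d, Nat.card ↥(Ddᶜ) = d := ⟨_, rfl⟩
  rw [hdc] at hcardG hcompl
  rw [hdd] at hcompl
  clear hdd hdc
  have hGeq : G = dc := by
    clear hcardG
    have e4 : sk - 2 = t - 1 := by omega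
    have e5 : n - sk - 1 = mm - 1 := by omega
    have e1 : sk - 1 = t := by omega
    have e2 : n - sk = mm := by omega
    have e3 : n + 2 = t + mm + 3 := by omega
    rw [e4, e5, e1, e2, e3, hskt] at hG
    have key : 12 * G + 12 * qa = 12 * qs := by
      have h12qa : 12 * qa = 6 * ((t + mm) + t) := by omega
      rw [hG, hq12, h12qa]
      rcases t with _ | t' <;> rcases mm with _ | mm' <;>
        simp only [Nat.succ_sub_one, Nat.zero_sub, Nat.sub_zero] <;> ring
    omega
  exact ⟨by rw [hcardF, hFeq], by rw [hcardG, hGeq]⟩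
end

section
/- Let K be a finite set with n elements and let 0 ∈ K. Then the number of ternary relations R ⊆ K × K × K such that the frame (K, R, id, {0}) (where ⋆ is the identity map on K) satisfies (left rotation), (right rotation), (center reflection), (left reflection), (right reflection), (identity), and (involution) equals 2^{(n−1)n(n+1)/6}; and the number of such R additionally satisfying (dense) equals 2^{(n−1)(n−2)(n+3)/6}. -/
/-- The conditions making `(K, R, ⋆, {z0})` an NA-frame: (left rotation),
(right rotation), (center reflection), (left reflection), (right reflection),
(identity), and (involution). -/
def NAConds {K : Type*} (R : K → K → K → Prop) (s : K → K) (z0 : K) : Prop :=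
  LeftRot R s ∧ RightRot R s ∧ CenterRefl R s ∧ LeftRefl R s ∧ RightRefl R s ∧
  (∀ x y, x = y ↔ ∃ u, u ∈ ({z0} : Set K) ∧ R x u y) ∧
  (∀ x, s (s x) = x)

namespace CountNA

variable {α : Type*}

lemma pair_eq_pair {x y a b : α} (h : ({x, y} : Multiset α) = {a, b}) :
    (x = a ∧ y = b) ∨ (x = b ∧ y = a) := by
  simp only [Multiset.insert_eq_cons] at h
  rcases Multiset.cons_eq_cons.mp h with ⟨h1, h2⟩ | ⟨hne, u, h1, h2⟩
  · exact Or.inl ⟨h1, Multiset.singleton_inj.mp h2⟩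
  · rcases (Multiset.singleton_eq_cons_iff _).mp h1 with ⟨hya, hu⟩
    subst hu
    rcases (Multiset.singleton_eq_cons_iff _).mp h2 with ⟨hbx, -⟩
    exact Or.inr ⟨hbx.symm, hya⟩

lemma triple_eq_triple {x y z a b c : α} (h : ({x, y, z} : Multiset α) = {a, b, c}) :
    (x = a ∧ y = b ∧ z = c) ∨ (x = a ∧ y = c ∧ z = b) ∨
    (x = b ∧ y = a ∧ z = c) ∨ (x = b ∧ y = c ∧ z = a) ∨
    (x = c ∧ y = a ∧ z = b) ∨ (x = c ∧ y = b ∧ z = a) := by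
  simp only [Multiset.insert_eq_cons] at h
  rcases Multiset.cons_eq_cons.mp h with ⟨h1, h2⟩ | ⟨hne, u, h1, h2⟩
  · rcases pair_eq_pair h2 with ⟨hb, hc⟩ | ⟨hb, hc⟩
    · exact Or.inl ⟨h1, hb, hc⟩
    · exact Or.inr (Or.inl ⟨h1, hb, hc⟩)
  · have hu : Multiset.card u = 1 := by
      have := congrArg Multiset.card h1
      simp at this; omega
    rcases Multiset.card_eq_one.mp hu with ⟨w, rfl⟩
    have h1' : ({y, z} : Multiset α) = {a, w} := h1
    have h2' : ({b, c} : Multiset α) = {x, w} := h2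
    rcases pair_eq_pair h1' with ⟨hy, hz⟩ | ⟨hy, hz⟩ <;>
      rcases pair_eq_pair h2' with ⟨hb, hc⟩ | ⟨hb, hc⟩ <;> subst_vars
    · exact Or.inr (Or.inr (Or.inl ⟨rfl, rfl, rfl⟩))
    · exact Or.inr (Or.inr (Or.inr (Or.inr (Or.inl ⟨rfl, rfl, rfl⟩))))
    · exact Or.inr (Or.inr (Or.inr (Or.inl ⟨rfl, rfl, rfl⟩)))
    · exact Or.inr (Or.inr (Or.inr (Or.inr (Or.inr ⟨rfl, rfl, rfl⟩))))

lemma two_choose_two (m : ℕ) : 2 * (m + 1).choose 2 = m * (m + 1) := by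
  induction m with
  | zero => decide
  | succ k ih =>
    have : (k + 2).choose 2 = (k + 1).choose 1 + (k + 1).choose 2 := rfl
    rw [this, Nat.choose_one_right, Nat.mul_add, ih]
    ring

lemma six_choose_three (m : ℕ) : 6 * (m + 2).choose 3 = m * (m + 1) * (m + 2) := by
  induction m with
  | zero => decide
  | succ k ih =>
    have h0 : (k + 3).choose 3 = (k + 2).choose 2 + (k + 2).choose 3 := rfl
    have h2 := two_choose_two (k + 1)
    calc 6 * (k + 3).choose 3 = 3 * (2 * (k + 2).choose 2) + 6 * (k + 2).choose 3 := by
            rw [h0]; ring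
      _ = 3 * ((k + 1) * (k + 2)) + k * (k + 1) * (k + 2) := by rw [h2, ih]
      _ = (k + 1) * (k + 1 + 1) * (k + 1 + 2) := by ring


variable {K : Type*} (z0 : K)

def Pcond (R : K → K → K → Prop) : Prop :=
  (∀ x y z, R x y z → R y x z) ∧ (∀ x y z, R x y z → R x z y) ∧
    (∀ x y, R x z0 y ↔ x = y)

lemma naconds_iff (R : K → K → K → Prop) : NAConds R id z0 ↔ Pcond z0 R := by
  simp only [NAConds, Pcond, LeftRot, RightRot, CenterRefl, LeftRefl, RightRefl,
    id_eq, Set.mem_singleton_iff]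
  constructor
  · rintro ⟨-, -, h3, h4, -, h6, -⟩
    refine ⟨h3, h4, fun x y => ?_⟩
    constructor
    · intro h; exact (h6 x y).mpr ⟨z0, rfl, h⟩
    · intro h; obtain ⟨u, rfl, hu⟩ := (h6 x y).mp h; exact hu
  · rintro ⟨hs1, hs2, hid⟩
    refine ⟨fun x y z h => hs2 _ _ _ (hs1 _ _ _ h),
      fun x y z h => hs1 _ _ _ (hs2 _ _ _ h), hs1, hs2,
      fun x y z h => hs1 _ _ _ (hs2 _ _ _ (hs1 _ _ _ h)), fun x y => ?_, fun _ => trivial⟩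
    constructor
    · intro h; exact ⟨z0, rfl, (hid x y).mpr h⟩
    · rintro ⟨u, rfl, h⟩; exact (hid x y).mp h


lemma perm_R {R : K → K → K → Prop} (hs1 : ∀ x y z, R x y z → R y x z)
    (hs2 : ∀ x y z, R x y z → R x z y) {x y z a b c : K}
    (h : ({x, y, z} : Multiset K) = {a, b, c}) (hR : R x y z) : R a b c := by
  rcases triple_eq_triple h with ⟨rfl, rfl, rfl⟩ | ⟨rfl, rfl, rfl⟩ | ⟨rfl, rfl, rfl⟩ |
    ⟨rfl, rfl, rfl⟩ | ⟨rfl, rfl, rfl⟩ | ⟨rfl, rfl, rfl⟩ <;>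
    solve_by_elim (maxDepth := 6) [hs1, hs2]

/-- The forced value of `R x y z` when one of the entries is `z0`. -/
def forcedP (x y z : K) : Prop :=
  (x = z0 ∧ y = z) ∨ (y = z0 ∧ x = z) ∨ (z = z0 ∧ x = y)

/-- From a symmetric relation to a predicate on unordered triples avoiding `z0`. -/
def toSym (R : K → K → K → Prop) : Sym {a : K // a ≠ z0} 3 → Prop :=
  fun m => ∀ a b c : {a : K // a ≠ z0}, (m : Multiset {a : K // a ≠ z0}) = {a, b, c} →
    R a.1 b.1 c.1

/-- From a predicate on unordered triples avoiding `z0` to a relation. -/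
noncomputable def ofSym (f : Sym {a : K // a ≠ z0} 3 → Prop) : K → K → K → Prop :=
  fun x y z =>
    letI := Classical.dec (x ≠ z0 ∧ y ≠ z0 ∧ z ≠ z0)
    if h : x ≠ z0 ∧ y ≠ z0 ∧ z ≠ z0 then
      f ⟨{⟨x, h.1⟩, ⟨y, h.2.1⟩, ⟨z, h.2.2⟩}, by simp⟩
    else forcedP z0 x y z

variable {z0}

lemma ofSym_pos (f : Sym {a : K // a ≠ z0} 3 → Prop) {x y z : K}
    (hx : x ≠ z0) (hy : y ≠ z0) (hz : z ≠ z0) :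
    ofSym z0 f x y z ↔ f ⟨{⟨x, hx⟩, ⟨y, hy⟩, ⟨z, hz⟩}, by simp⟩ := by
  rw [ofSym, dif_pos ⟨hx, hy, hz⟩]

lemma ofSym_neg (f : Sym {a : K // a ≠ z0} 3 → Prop) {x y z : K}
    (h : ¬(x ≠ z0 ∧ y ≠ z0 ∧ z ≠ z0)) :
    ofSym z0 f x y z ↔ forcedP z0 x y z := by
  rw [ofSym, dif_neg h]


lemma ofSym_apply (f : Sym {a : K // a ≠ z0} 3 → Prop) (a b c : {a : K // a ≠ z0}) :
    ofSym z0 f a.1 b.1 c.1 ↔ f ⟨{a, b, c}, by simp⟩ := by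
  rw [ofSym_pos f a.2 b.2 c.2]

lemma ofSym_Pcond (f : Sym {a : K // a ≠ z0} 3 → Prop) : Pcond z0 (ofSym z0 f) := by
  have hswap1 : ∀ a b c : {a : K // a ≠ z0},
      ({a, b, c} : Multiset {a : K // a ≠ z0}) = {b, a, c} := fun a b c => by
    simp only [Multiset.insert_eq_cons]; exact Multiset.cons_swap a b _
  have hswap2 : ∀ a b c : {a : K // a ≠ z0},
      ({a, b, c} : Multiset {a : K // a ≠ z0}) = {a, c, b} := fun a b c => by
    simp only [Multiset.insert_eq_cons]
    exact congrArg (Multiset.cons a) (Multiset.cons_swap b c 0)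
  refine ⟨fun x y z h => ?_, fun x y z h => ?_, fun x y => ?_⟩
  · by_cases hc : x ≠ z0 ∧ y ≠ z0 ∧ z ≠ z0
    · rw [ofSym_pos f hc.1 hc.2.1 hc.2.2] at h
      rw [ofSym_pos f hc.2.1 hc.1 hc.2.2]
      have he : (⟨({⟨y, hc.2.1⟩, ⟨x, hc.1⟩, ⟨z, hc.2.2⟩} : Multiset {a : K // a ≠ z0}),
          by simp⟩ : Sym {a : K // a ≠ z0} 3) =
          ⟨{⟨x, hc.1⟩, ⟨y, hc.2.1⟩, ⟨z, hc.2.2⟩}, by simp⟩ := Sym.ext (hswap1 _ _ _)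
      rw [he]
      exact h
    · rw [ofSym_neg f hc] at h
      rw [ofSym_neg f (by tauto)]
      rcases h with ⟨h1, h2⟩ | ⟨h1, h2⟩ | ⟨h1, h2⟩
      · exact Or.inr (Or.inl ⟨h1, h2⟩)
      · exact Or.inl ⟨h1, h2⟩
      · exact Or.inr (Or.inr ⟨h1, h2.symm⟩)
  · by_cases hc : x ≠ z0 ∧ y ≠ z0 ∧ z ≠ z0
    · rw [ofSym_pos f hc.1 hc.2.1 hc.2.2] at h
      rw [ofSym_pos f hc.1 hc.2.2 hc.2.1]
      have he : (⟨({⟨x, hc.1⟩, ⟨z, hc.2.2⟩, ⟨y, hc.2.1⟩} : Multiset {a : K // a ≠ z0}),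
          by simp⟩ : Sym {a : K // a ≠ z0} 3) =
          ⟨{⟨x, hc.1⟩, ⟨y, hc.2.1⟩, ⟨z, hc.2.2⟩}, by simp⟩ := Sym.ext (hswap2 _ _ _)
      rw [he]
      exact h
    · rw [ofSym_neg f hc] at h
      rw [ofSym_neg f (by tauto)]
      rcases h with ⟨h1, h2⟩ | ⟨h1, h2⟩ | ⟨h1, h2⟩
      · exact Or.inl ⟨h1, h2.symm⟩
      · exact Or.inr (Or.inr ⟨h1, h2⟩)
      · exact Or.inr (Or.inl ⟨h1, h2⟩)
  · rw [ofSym_neg f (by tauto)]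
    constructor
    · rintro (⟨h1, h2⟩ | ⟨h1, h2⟩ | ⟨h1, h2⟩) <;> subst_vars <;> rfl
    · intro h; exact Or.inr (Or.inl ⟨rfl, h⟩)


lemma leftInv {R : K → K → K → Prop} (hP : Pcond z0 R) : ofSym z0 (toSym z0 R) = R := by
  obtain ⟨hs1, hs2, hid⟩ := hP
  have hL : ∀ y z, R z0 y z ↔ y = z := fun y z =>
    ⟨fun h => (hid y z).mp (hs1 _ _ _ h), fun h => by
      subst h; exact hs1 _ _ _ ((hid y y).mpr rfl)⟩
  have hRt : ∀ x y, R x y z0 ↔ x = y := fun x y =>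
    ⟨fun h => (hid x y).mp (hs2 _ _ _ h), fun h => hs2 _ _ _ ((hid x y).mpr h)⟩
  funext x y z
  apply propext
  by_cases hc : x ≠ z0 ∧ y ≠ z0 ∧ z ≠ z0
  · rw [ofSym_pos (toSym z0 R) hc.1 hc.2.1 hc.2.2]
    constructor
    · intro hf; exact hf ⟨x, hc.1⟩ ⟨y, hc.2.1⟩ ⟨z, hc.2.2⟩ rfl
    · intro hR a b c hm
      have hm' : ({x, y, z} : Multiset K) = {a.1, b.1, c.1} := by
        have := congrArg (Multiset.map (Subtype.val)) hm
        simpa using this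
      exact perm_R hs1 hs2 hm' hR
  · rw [ofSym_neg (toSym z0 R) hc]
    push_neg at hc
    rcases em (x = z0) with rfl | hx
    · rw [hL]
      constructor
      · rintro (⟨h1, h2⟩ | ⟨h1, h2⟩ | ⟨h1, h2⟩) <;> subst_vars <;> rfl
      · intro h; exact Or.inl ⟨rfl, h⟩
    rcases em (y = z0) with rfl | hy
    · rw [hid]
      constructor
      · rintro (⟨h1, h2⟩ | ⟨h1, h2⟩ | ⟨h1, h2⟩) <;> subst_vars <;> rfl
      · intro h; exact Or.inr (Or.inl ⟨rfl, h⟩)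
    rcases em (z = z0) with rfl | hz
    · rw [hRt]
      constructor
      · rintro (⟨h1, h2⟩ | ⟨h1, h2⟩ | ⟨h1, h2⟩) <;> subst_vars <;> rfl
      · intro h; exact Or.inr (Or.inr ⟨rfl, h⟩)
    exact absurd (hc hx hy) hz

lemma rightInv (f : Sym {a : K // a ≠ z0} 3 → Prop) : toSym z0 (ofSym z0 f) = f := by
  funext m
  apply propext
  obtain ⟨a, b, c, hm⟩ := Multiset.card_eq_three.mp m.2
  constructor
  · intro hf
    have h1 := hf a b c hm
    rw [ofSym_apply] at h1
    have : (⟨({a, b, c} : Multiset _), by simp⟩ : Sym {a : K // a ≠ z0} 3) = m :=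
      Sym.ext hm.symm
    rwa [this] at h1
  · intro hf p q r hpqr
    rw [ofSym_apply]
    have : (⟨({p, q, r} : Multiset _), by simp⟩ : Sym {a : K // a ≠ z0} 3) = m :=
      Sym.ext hpqr.symm
    rwa [this]


/-- The bijection between symmetric relations with the identity condition and
predicates on unordered triples avoiding `z0`. -/
noncomputable def symEquiv :
    {R : K → K → K → Prop // Pcond z0 R} ≃ (Sym {a : K // a ≠ z0} 3 → Prop) where
  toFun R := toSym z0 R.1
  invFun f := ⟨ofSym z0 f, ofSym_Pcond f⟩
  left_inv := fun R => Subtype.ext (leftInv R.2)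
  right_inv := rightInv

variable (z0)

def constSym (a : {a : K // a ≠ z0}) : Sym {a : K // a ≠ z0} 3 := ⟨{a, a, a}, by simp⟩

variable {z0}

lemma constSym_injective : Function.Injective (constSym z0) := by
  intro a b h
  have h' : ({a, a, a} : Multiset {a : K // a ≠ z0}) = {b, b, b} := congrArg Subtype.val h
  have ha : a ∈ ({a, a, a} : Multiset {a : K // a ≠ z0}) := by simp
  rw [h'] at ha
  simpa using ha

lemma dense_iff {R : K → K → K → Prop} (hP : Pcond z0 R) :
    (∀ x, R x x x) ↔ ∀ m, (∃ a, constSym z0 a = m) → toSym z0 R m := by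
  constructor
  · rintro hd m ⟨a, rfl⟩ p q r hm
    have hm' : ({a, a, a} : Multiset {a : K // a ≠ z0}) = {p, q, r} := hm
    rcases triple_eq_triple hm' with ⟨rfl, rfl, rfl⟩ | ⟨rfl, rfl, rfl⟩ | ⟨rfl, rfl, rfl⟩ |
      ⟨rfl, rfl, rfl⟩ | ⟨rfl, rfl, rfl⟩ | ⟨rfl, rfl, rfl⟩ <;> exact hd a.1
  · intro hg x
    rcases em (x = z0) with rfl | hx
    · exact (hP.2.2 x x).mpr rfl
    · exact hg (constSym z0 ⟨x, hx⟩) ⟨⟨x, hx⟩, rfl⟩ ⟨x, hx⟩ ⟨x, hx⟩ ⟨x, hx⟩ rfl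

/-- Functions forced to be `True` on a subset correspond to functions on the
complement. -/
noncomputable def forceTrueEquiv {α : Type*} (p : α → Prop) :
    {g : α → Prop // ∀ a, p a → g a} ≃ ({a // ¬ p a} → Prop) where
  toFun g a := g.1 a.1
  invFun f := ⟨fun a => p a ∨ ∃ h : ¬ p a, f ⟨a, h⟩, fun a ha => Or.inl ha⟩
  left_inv g := by
    apply Subtype.ext
    funext a
    apply propext
    constructor
    · rintro (h | ⟨h, hf⟩)
      · exact g.2 a h
      · exact hf
    · intro h
      rcases em (p a) with hp | hp
      · exact Or.inl hp
      · exact Or.inr ⟨hp, h⟩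
  right_inv f := by
    funext a
    apply propext
    constructor
    · rintro (h | ⟨h, hf⟩)
      · exact absurd h a.2
      · exact hf
    · intro h; exact Or.inr ⟨a.2, h⟩

/-- The bijection for the dense case. -/
noncomputable def symEquivDense :
    {R : K → K → K → Prop // Pcond z0 R ∧ ∀ x, R x x x} ≃
      {g : Sym {a : K // a ≠ z0} 3 → Prop // ∀ m, (∃ a, constSym z0 a = m) → g m} where
  toFun R := ⟨toSym z0 R.1, (dense_iff R.2.1).mp R.2.2⟩
  invFun f := ⟨ofSym z0 f.1, ofSym_Pcond f.1, by
    refine (dense_iff (ofSym_Pcond f.1)).mpr ?_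
    rw [rightInv]
    exact f.2⟩
  left_inv := fun R => Subtype.ext (leftInv R.2.1)
  right_inv := fun f => Subtype.ext (rightInv f.1)

end CountNA

/-- Theorem 27(i), symmetric cases: on an `n`-element set `K` with base point
`0` and `⋆ = id`, the number of ternary relations `R` making `(K, R, id, {0})`
an NA-frame is `2^{(n−1)n(n+1)/6}`, and the number making it also dense is
`2^{(n−1)(n−2)(n+3)/6}` (the exponents being characterized here by `6·E₁`
and `6·E₂`). -/
theorem count_symm_NA_frames {K : Type*} [Fintype K] (z0 : K)
    (n : ℕ) (hn : Fintype.card K = n)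
    (E1 E2 : ℕ)
    (hE1 : 6 * E1 = (n - 1) * n * (n + 1))
    (hE2 : 6 * E2 = (n - 1) * (n - 2) * (n + 3)) :
    Nat.card {R : K → K → K → Prop // NAConds R id z0} = 2 ^ E1 ∧
    Nat.card {R : K → K → K → Prop //
        NAConds R id z0 ∧ ∀ x, R x x x} = 2 ^ E2 := by
  classical
  obtain ⟨m, rfl⟩ : ∃ m, n = m + 1 := by
    refine ⟨n - 1, ?_⟩
    have : 0 < n := hn ▸ Fintype.card_pos_iff.mpr ⟨z0⟩
    omega
  simp only [Nat.add_sub_cancel] at hE1 hE2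
  have hcardA : Fintype.card {a : K // a ≠ z0} = m := by
    have h1 : Fintype.card {a : K // a ≠ z0} =
        Fintype.card K - Fintype.card {a : K // a = z0} := Fintype.card_subtype_compl _
    rw [Fintype.card_subtype_eq, hn] at h1
    omega
  have hcardSym : Nat.card (Sym {a : K // a ≠ z0} 3) = (m + 2).choose 3 := by
    rw [Nat.card_eq_fintype_card, Sym.card_sym_eq_choose, hcardA]
    congr 1
  have hcardProp : Nat.card Prop = 2 := by
    rw [Nat.card_congr Equiv.propEquivBool, Nat.card_eq_fintype_card, Fintype.card_bool]
  have h6c : 6 * (m + 2).choose 3 = m * (m + 1) * (m + 2) := CountNA.six_choose_three m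
  constructor
  · have e : {R : K → K → K → Prop // NAConds R id z0} ≃
        (Sym {a : K // a ≠ z0} 3 → Prop) :=
      (Equiv.subtypeEquivRight (CountNA.naconds_iff z0)).trans CountNA.symEquiv
    rw [Nat.card_congr e, Nat.card_fun, hcardProp, hcardSym]
    congr 1
    have harith : m * (m + 1) * (m + 1 + 1) = m * (m + 1) * (m + 2) := by ring
    omega
  · have e : {R : K → K → K → Prop // NAConds R id z0 ∧ ∀ x, R x x x} ≃
        ({m' : Sym {a : K // a ≠ z0} 3 // ¬ ∃ a, CountNA.constSym z0 a = m'} → Prop) :=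
      (Equiv.subtypeEquivRight (fun R => and_congr_left' (CountNA.naconds_iff z0 R))).trans
        (CountNA.symEquivDense.trans (CountNA.forceTrueEquiv _))
    rw [Nat.card_congr e, Nat.card_fun, hcardProp]
    have hrange : Nat.card {x : Sym {a : K // a ≠ z0} 3 // ∃ a, CountNA.constSym z0 a = x}
        = m := by
      calc Nat.card {x : Sym {a : K // a ≠ z0} 3 // ∃ a, CountNA.constSym z0 a = x}
          = Nat.card {a : K // a ≠ z0} :=
            (Nat.card_congr ((Equiv.ofInjective _ CountNA.constSym_injective).trans
              (Equiv.subtypeEquivRight fun x => Iff.rfl))).symm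
        _ = m := by rw [Nat.card_eq_fintype_card, hcardA]
    have hcompl : Nat.card {x : Sym {a : K // a ≠ z0} 3 // ¬ ∃ a, CountNA.constSym z0 a = x}
        = (m + 2).choose 3 - m := by
      have t1 : Fintype.card (Sym {a : K // a ≠ z0} 3) = (m + 2).choose 3 := by
        rw [← Nat.card_eq_fintype_card]; exact hcardSym
      have t2 : Fintype.card {x : Sym {a : K // a ≠ z0} 3 // ∃ a, CountNA.constSym z0 a = x}
          = m := by rw [← Nat.card_eq_fintype_card]; exact hrange
      rw [Nat.card_eq_fintype_card, Fintype.card_subtype_compl, t1, t2]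
    rw [hcompl]
    congr 1
    rcases m with - | k
    · have h0 : Nat.choose 2 3 = 0 := rfl
      simp only [Nat.zero_mul] at hE2
      omega
    · have hk : k + 1 + 1 - 2 = k := by omega
      rw [hk] at hE2
      have key : 6 * E2 + 6 * (k + 1) = 6 * ((k + 1 + 2).choose 3) := by
        calc 6 * E2 + 6 * (k + 1) = (k + 1) * k * (k + 1 + 1 + 3) + 6 * (k + 1) := by rw [hE2]
          _ = (k + 1) * (k + 1 + 1) * (k + 1 + 2) := by ring
          _ = 6 * ((k + 1 + 2).choose 3) := (CountNA.six_choose_three (k + 1)).symm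
      omega
end

section
/- Let A be a Boolean algebra equipped with a binary operation ;, a unary operation ⌣, and a distinguished element 1′ such that for all x, y, z ∈ A: (x ⊔ y);z = (x;z) ⊔ (y;z), (x⌣)⌣ = x, (x ⊔ y)⌣ = x⌣ ⊔ y⌣, (x;y)⌣ = y⌣;x⌣, and x⌣;((x;y)ᶜ) ≤ yᶜ. Let K be the set of ultrafilters of A, and define R = {(X, Y, Z) ∈ K³ : ∀x ∈ X, ∀y ∈ Y, x;y ∈ Z}, ⋆X = {x⌣ : x ∈ X}, and I = {X ∈ K : 1′ ∈ X}. Then ⋆ maps ultrafilters to ultrafilters, and the map ε : A → 𝒫(K) given by ε(x) = {U ∈ K : x ∈ U} is injective and satisfies, for all x, y ∈ A: ε(x ⊔ y) = ε(x) ∪ ε(y); ε(xᶜ) = K ∖ ε(x); ε(x;y) = {Z ∈ K : ∃X ∈ ε(x), ∃Y ∈ ε(y), (X, Y, Z) ∈ R}; ε(x⌣) = {⋆U : U ∈ ε(x)}; and ε(1′) = I. Hence A is isomorphic to a subalgebra of the complex algebra of the frame (K, R, ⋆, I). -/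
/-- `U` is an ultrafilter of the Boolean algebra `A`: `⊥ ∉ U`, `⊤ ∈ U`, `U` is
upward closed and closed under binary meets, and for every `x` either `x ∈ U`
or `xᶜ ∈ U`. -/
def IsUF {A : Type*} [BooleanAlgebra A] (U : Set A) : Prop :=
  ⊥ ∉ U ∧ ⊤ ∈ U ∧ (∀ x ∈ U, ∀ y, x ≤ y → y ∈ U) ∧
  (∀ x ∈ U, ∀ y ∈ U, x ⊓ y ∈ U) ∧ (∀ x : A, x ∈ U ∨ xᶜ ∈ U)

section Aux
variable {A : Type*} [BooleanAlgebra A]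

lemma uf_prime {U : Set A} (h : IsUF U) {a b : A} (hab : a ⊔ b ∈ U) :
    a ∈ U ∨ b ∈ U := by
  obtain ⟨hbot, htop, hup, hmeet, hcompl⟩ := h
  by_contra hc
  push_neg at hc
  have ha : aᶜ ∈ U := (hcompl a).resolve_left hc.1
  have hb : bᶜ ∈ U := (hcompl b).resolve_left hc.2
  have h1 : aᶜ ⊓ bᶜ ∈ U := hmeet _ ha _ hb
  have h2 : (a ⊔ b) ⊓ (aᶜ ⊓ bᶜ) ∈ U := hmeet _ hab _ h1
  rw [← compl_sup, inf_compl_eq_bot] at h2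
  exact hbot h2

lemma uf_not_compl {U : Set A} (h : IsUF U) {a : A} (ha : a ∈ U) : aᶜ ∉ U := by
  intro h'
  have := h.2.2.2.1 _ ha _ h'
  rw [inf_compl_eq_bot] at this
  exact h.1 this

/-- Key Zorn-based lemma: any "weakly prime" upward-closed set `G` not
containing `⊥` contains an ultrafilter around any of its points. -/
lemma exists_uf (G : Set A) (hbot : ⊥ ∉ G)
    (hup : ∀ c ∈ G, ∀ d : A, c ≤ d → d ∈ G)
    (hprime : ∀ c ∈ G, ∀ a : A, a ⊓ c ∈ G ∨ aᶜ ⊓ c ∈ G)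
    (x : A) (hx : x ∈ G) : ∃ X : Set A, IsUF X ∧ x ∈ X ∧ X ⊆ G := by
  set S : Set (Set A) := {F | x ∈ F ∧ F ⊆ G ∧ (∀ c ∈ F, ∀ d : A, c ≤ d → d ∈ F)
    ∧ (∀ a ∈ F, ∀ b ∈ F, a ⊓ b ∈ F)} with hS
  have h0 : {d : A | x ≤ d} ∈ S :=
    ⟨le_refl x, fun d hd => hup x hx d hd, fun c hc d hd => hc.trans hd,
      fun a ha b hb => le_inf ha hb⟩
  obtain ⟨X, hxX, hXS, hXmax⟩ :=
    zorn_subset_nonempty S (fun c hcS hchain hcne => by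
      refine ⟨⋃₀ c, ⟨?_, ?_, ?_, ?_⟩, fun s hs => Set.subset_sUnion_of_mem hs⟩
      · obtain ⟨F, hF⟩ := hcne
        exact ⟨F, hF, (hcS hF).1⟩
      · rintro a ⟨F, hF, haF⟩
        exact (hcS hF).2.1 haF
      · rintro a ⟨F, hF, haF⟩ d hd
        exact ⟨F, hF, (hcS hF).2.2.1 a haF d hd⟩
      · rintro a ⟨F, hF, haF⟩ b ⟨F', hF', hbF'⟩
        rcases hchain.total hF hF' with h | h
        · exact ⟨F', hF', (hcS hF').2.2.2 a (h haF) b hbF'⟩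
        · exact ⟨F, hF, (hcS hF).2.2.2 a haF b (h hbF')⟩) _ h0
  obtain ⟨hxmem, hXG, hXup, hXmeet⟩ := hXS
  have htop : ⊤ ∈ X := hXup x hxmem ⊤ le_top
  refine ⟨X, ⟨fun h => hbot (hXG h), htop, hXup, hXmeet, ?_⟩, hxmem, hXG⟩
  intro a
  by_contra hc
  push_neg at hc
  have key : ∀ b : A, b ∉ X → ∃ c ∈ X, b ⊓ c ∉ G := by
    intro b hbX
    by_contra hk
    push_neg at hk
    have hXbS : {u : A | ∃ c ∈ X, b ⊓ c ≤ u} ∈ S := by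
      refine ⟨⟨x, hxmem, inf_le_right⟩, ?_, ?_, ?_⟩
      · rintro u ⟨c, hcX, hcu⟩
        exact hup _ (hk c hcX) u hcu
      · rintro u ⟨c, hcX, hcu⟩ d hd
        exact ⟨c, hcX, hcu.trans hd⟩
      · rintro u ⟨c, hcX, hcu⟩ v ⟨c', hc'X, hc'v⟩
        exact ⟨c ⊓ c', hXmeet c hcX c' hc'X,
          le_inf ((inf_le_inf_left b inf_le_left).trans hcu)
            ((inf_le_inf_left b inf_le_right).trans hc'v)⟩
    have hsub : X ⊆ {u : A | ∃ c ∈ X, b ⊓ c ≤ u} := fun u hu => ⟨u, hu, inf_le_right⟩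
    have : {u : A | ∃ c ∈ X, b ⊓ c ≤ u} ⊆ X := hXmax hXbS hsub
    exact hbX (this ⟨⊤, htop, le_of_eq (inf_top_eq b)⟩)
  obtain ⟨c1, hc1, hn1⟩ := key a hc.1
  obtain ⟨c2, hc2, hn2⟩ := key aᶜ hc.2
  have hcc : c1 ⊓ c2 ∈ X := hXmeet _ hc1 _ hc2
  rcases hprime _ (hXG hcc) a with h | h
  · exact hn1 (hup _ h _ (inf_le_inf_left a inf_le_left))
  · exact hn2 (hup _ h _ (inf_le_inf_left aᶜ inf_le_right))

end Aux

section CvRc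
variable {A : Type*} [BooleanAlgebra A] {cv : A → A}

lemma cv_mono (h7 : ∀ x : A, cv (cv x) = x) (h8 : ∀ x y : A, cv (x ⊔ y) = cv x ⊔ cv y)
    {x y : A} (hxy : x ≤ y) : cv x ≤ cv y := by
  have : cv x ⊔ cv y = cv y := by rw [← h8, sup_eq_right.2 hxy]
  exact sup_eq_right.1 this

lemma cv_bot (h7 : ∀ x : A, cv (cv x) = x) (h8 : ∀ x y : A, cv (x ⊔ y) = cv x ⊔ cv y) :
    cv (⊥ : A) = ⊥ := by
  have := cv_mono h7 h8 (bot_le : (⊥ : A) ≤ cv ⊥)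
  rw [h7] at this
  exact le_bot_iff.1 this

lemma cv_top (h7 : ∀ x : A, cv (cv x) = x) (h8 : ∀ x y : A, cv (x ⊔ y) = cv x ⊔ cv y) :
    cv (⊤ : A) = ⊤ := by
  have := cv_mono h7 h8 (le_top : cv (⊤ : A) ≤ ⊤)
  rw [h7] at this
  exact top_le_iff.1 this

lemma cv_inf (h7 : ∀ x : A, cv (cv x) = x) (h8 : ∀ x y : A, cv (x ⊔ y) = cv x ⊔ cv y)
    (x y : A) : cv (x ⊓ y) = cv x ⊓ cv y := by
  refine le_antisymm (le_inf (cv_mono h7 h8 inf_le_left) (cv_mono h7 h8 inf_le_right)) ?_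
  have h1 : cv (cv x ⊓ cv y) ≤ x ⊓ y := by
    refine le_inf ?_ ?_
    · have := cv_mono h7 h8 (inf_le_left : cv x ⊓ cv y ≤ cv x); rwa [h7] at this
    · have := cv_mono h7 h8 (inf_le_right : cv x ⊓ cv y ≤ cv y); rwa [h7] at this
  have := cv_mono h7 h8 h1
  rwa [h7] at this

lemma cv_compl (h7 : ∀ x : A, cv (cv x) = x) (h8 : ∀ x y : A, cv (x ⊔ y) = cv x ⊔ cv y)
    (x : A) : cv (xᶜ) = (cv x)ᶜ := by
  symm
  refine compl_unique ?_ ?_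
  · rw [← cv_inf h7 h8, inf_compl_eq_bot, cv_bot h7 h8]
  · rw [← h8, sup_compl_eq_top, cv_top h7 h8]

variable {rc : A → A → A}

lemma rc_mono_left (h5 : ∀ x y z : A, rc (x ⊔ y) z = rc x z ⊔ rc y z)
    {x y : A} (z : A) (hxy : x ≤ y) : rc x z ≤ rc y z := by
  have : rc x z ⊔ rc y z = rc y z := by rw [← h5, sup_eq_right.2 hxy]
  exact sup_eq_right.1 this

lemma rc_sup_right (h5 : ∀ x y z : A, rc (x ⊔ y) z = rc x z ⊔ rc y z)
    (h7 : ∀ x : A, cv (cv x) = x) (h8 : ∀ x y : A, cv (x ⊔ y) = cv x ⊔ cv y)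
    (h9 : ∀ x y : A, cv (rc x y) = rc (cv y) (cv x))
    (x y z : A) : rc x (y ⊔ z) = rc x y ⊔ rc x z := by
  have e1 : ∀ u v : A, cv (rc (cv v) (cv u)) = rc u v := by
    intro u v; rw [← h9, h7]
  calc rc x (y ⊔ z) = cv (rc (cv (y ⊔ z)) (cv x)) := (e1 _ _).symm
    _ = cv (rc (cv y ⊔ cv z) (cv x)) := by rw [h8]
    _ = cv (rc (cv y) (cv x) ⊔ rc (cv z) (cv x)) := by rw [h5]
    _ = cv (rc (cv y) (cv x)) ⊔ cv (rc (cv z) (cv x)) := h8 _ _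
    _ = rc x y ⊔ rc x z := by rw [e1, e1]

lemma rc_mono_right (h5 : ∀ x y z : A, rc (x ⊔ y) z = rc x z ⊔ rc y z)
    (h7 : ∀ x : A, cv (cv x) = x) (h8 : ∀ x y : A, cv (x ⊔ y) = cv x ⊔ cv y)
    (h9 : ∀ x y : A, cv (rc x y) = rc (cv y) (cv x))
    (x : A) {y z : A} (hyz : y ≤ z) : rc x y ≤ rc x z := by
  have : rc x y ⊔ rc x z = rc x z := by
    rw [← rc_sup_right h5 h7 h8 h9, sup_eq_right.2 hyz]
  exact sup_eq_right.1 this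

lemma rc_cycle (h5 : ∀ x y z : A, rc (x ⊔ y) z = rc x z ⊔ rc y z)
    (h7 : ∀ x : A, cv (cv x) = x) (h8 : ∀ x y : A, cv (x ⊔ y) = cv x ⊔ cv y)
    (h9 : ∀ x y : A, cv (rc x y) = rc (cv y) (cv x))
    (h10 : ∀ x y : A, rc (cv x) ((rc x y)ᶜ) ≤ yᶜ)
    {u v w : A} (h : rc u v ⊓ w = ⊥) : v ⊓ rc (cv u) w = ⊥ := by
  have hw : w ≤ (rc u v)ᶜ := le_compl_iff_disjoint_left.2 (disjoint_iff.2 h)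
  have h1 : rc (cv u) w ≤ vᶜ :=
    (rc_mono_right h5 h7 h8 h9 _ hw).trans (h10 u v)
  have := inf_le_inf_left v h1
  rwa [inf_compl_eq_bot, le_bot_iff] at this

lemma rc_bot_right (h5 : ∀ x y z : A, rc (x ⊔ y) z = rc x z ⊔ rc y z)
    (h7 : ∀ x : A, cv (cv x) = x) (h8 : ∀ x y : A, cv (x ⊔ y) = cv x ⊔ cv y)
    (h9 : ∀ x y : A, cv (rc x y) = rc (cv y) (cv x))
    (h10 : ∀ x y : A, rc (cv x) ((rc x y)ᶜ) ≤ yᶜ)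
    (x : A) : rc x (⊥ : A) = ⊥ := by
  have h := rc_cycle h5 h7 h8 h9 h10
    (u := cv x) (v := rc x ⊥) (w := ⊥) (inf_bot_eq _)
  rw [h7] at h
  rw [← inf_idem (a := rc x ⊥)]
  exact h

lemma rc_bot_left (h5 : ∀ x y z : A, rc (x ⊔ y) z = rc x z ⊔ rc y z)
    (h7 : ∀ x : A, cv (cv x) = x) (h8 : ∀ x y : A, cv (x ⊔ y) = cv x ⊔ cv y)
    (h9 : ∀ x y : A, cv (rc x y) = rc (cv y) (cv x))
    (h10 : ∀ x y : A, rc (cv x) ((rc x y)ᶜ) ≤ yᶜ)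
    (y : A) : rc (⊥ : A) y = ⊥ := by
  have e1 : cv (rc (cv y) (cv ⊥)) = rc ⊥ y := by rw [← h9, h7]
  rw [← e1, cv_bot h7 h8, rc_bot_right h5 h7 h8 h9 h10, cv_bot h7 h8]

end CvRc

/-- Theorem (McKenzie's ultrafilter frame construction, Theorem thm8): let `A`
be a Boolean algebra with operations `;` (rc), `⌣` (cv) and constant `1′` (e)
satisfying axioms (R5), (R7)–(R10).  On the set `K` of ultrafilters of `A`,
put `R X Y Z ↔ ∀ x ∈ X, ∀ y ∈ Y, x;y ∈ Z`, `⋆X = {x⌣ : x ∈ X}`, and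
`I = {X : 1′ ∈ X}`.  Then `⋆` maps ultrafilters to ultrafilters, and the map
`ε(x) = {U : x ∈ U}` is injective and turns `⊔` into union, `ᶜ` into
complement, `;` into frame composition, `⌣` into the `⋆`-image, and `1′`
into `I`; hence `A` embeds in the complex algebra of the frame `(K, R, ⋆, I)`. -/
theorem ultrafilter_frame_embedding {A : Type*} [BooleanAlgebra A]
    (rc : A → A → A) (cv : A → A) (e : A)
    (h5 : ∀ x y z : A, rc (x ⊔ y) z = rc x z ⊔ rc y z)
    (h7 : ∀ x : A, cv (cv x) = x)
    (h8 : ∀ x y : A, cv (x ⊔ y) = cv x ⊔ cv y)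
    (h9 : ∀ x y : A, cv (rc x y) = rc (cv y) (cv x))
    (h10 : ∀ x y : A, rc (cv x) ((rc x y)ᶜ) ≤ yᶜ) :
    (∀ U : Set A, IsUF U → IsUF (cv '' U)) ∧
    Function.Injective
      (fun x : A => ({U : {U : Set A // IsUF U} | x ∈ U.1} :
        Set {U : Set A // IsUF U})) ∧
    (∀ x y : A, {U : {U : Set A // IsUF U} | x ⊔ y ∈ U.1} =
      {U : {U : Set A // IsUF U} | x ∈ U.1} ∪
        {U : {U : Set A // IsUF U} | y ∈ U.1}) ∧
    (∀ x : A, {U : {U : Set A // IsUF U} | xᶜ ∈ U.1} =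
      ({U : {U : Set A // IsUF U} | x ∈ U.1})ᶜ) ∧
    (∀ x y : A, {Z : {U : Set A // IsUF U} | rc x y ∈ Z.1} =
      {Z : {U : Set A // IsUF U} |
        ∃ X : {U : Set A // IsUF U}, x ∈ X.1 ∧
        ∃ Y : {U : Set A // IsUF U}, y ∈ Y.1 ∧
          ∀ a ∈ X.1, ∀ b ∈ Y.1, rc a b ∈ Z.1}) ∧
    (∀ x : A, {W : {U : Set A // IsUF U} | cv x ∈ W.1} =
      {W : {U : Set A // IsUF U} |
        ∃ V : {U : Set A // IsUF U}, x ∈ V.1 ∧ W.1 = cv '' V.1}) ∧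
    ({U : {U : Set A // IsUF U} | e ∈ U.1} =
      {X : {U : Set A // IsUF U} | e ∈ X.1}) := by
  -- Part 1 : cv maps ultrafilters to ultrafilters
  have part1 : ∀ U : Set A, IsUF U → IsUF (cv '' U) := by
    intro U hU
    obtain ⟨hbot, htop, hup, hmeet, hcompl⟩ := hU
    refine ⟨?_, ⟨⊤, htop, cv_top h7 h8⟩, ?_, ?_, ?_⟩
    · rintro ⟨u, hu, hcu⟩
      have : u = ⊥ := by rw [← h7 u, hcu, cv_bot h7 h8]
      exact hbot (this ▸ hu)
    · rintro _ ⟨u, hu, rfl⟩ d hd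
      have hud : u ≤ cv d := by
        have := cv_mono h7 h8 hd; rwa [h7] at this
      exact ⟨cv d, hup u hu _ hud, h7 d⟩
    · rintro _ ⟨u, hu, rfl⟩ _ ⟨v, hv, rfl⟩
      exact ⟨u ⊓ v, hmeet _ hu _ hv, cv_inf h7 h8 u v⟩
    · intro a
      rcases hcompl (cv a) with h | h
      · exact Or.inl ⟨cv a, h, h7 a⟩
      · refine Or.inr ⟨cv (aᶜ), ?_, h7 _⟩
        rwa [cv_compl h7 h8]
  refine ⟨part1, ?_, ?_, ?_, ?_, ?_, rfl⟩
  -- Part 2 : injectivity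
  · intro x y hxy
    have hxy' : ∀ U : {U : Set A // IsUF U}, x ∈ U.1 ↔ y ∈ U.1 := by
      intro U
      exact Set.ext_iff.1 hxy U
    by_contra hne
    have hsep : ∀ u v : A, u ⊓ vᶜ ≠ ⊥ →
        ∃ X : Set A, IsUF X ∧ u ∈ X ∧ v ∉ X := by
      intro u v huv
      obtain ⟨X, hXuf, hmem, -⟩ := exists_uf {a : A | a ≠ ⊥} (fun h => h rfl)
        (fun c hc d hd h => hc (le_bot_iff.1 (h ▸ hd)))
        (fun c hc a => by
          by_contra h
          push_neg at h
          simp only [Set.mem_setOf_eq, not_not] at h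
          apply hc
          rw [← top_inf_eq c, ← sup_compl_eq_top (x := a), inf_sup_right, h.1, h.2, bot_sup_eq])
        (u ⊓ vᶜ) huv
      refine ⟨X, hXuf, hXuf.2.2.1 _ hmem _ inf_le_left, ?_⟩
      have hvc : vᶜ ∈ X := hXuf.2.2.1 _ hmem _ inf_le_right
      intro hv
      have := hXuf.2.2.2.1 _ hv _ hvc
      rw [inf_compl_eq_bot] at this
      exact hXuf.1 this
    rcases eq_or_ne (x ⊓ yᶜ) ⊥ with h1 | h1
    · rcases eq_or_ne (y ⊓ xᶜ) ⊥ with h2 | h2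
      · apply hne
        have hx : x ≤ y := by rwa [← sdiff_eq, sdiff_eq_bot_iff] at h1
        have hy : y ≤ x := by rwa [← sdiff_eq, sdiff_eq_bot_iff] at h2
        exact le_antisymm hx hy
      · obtain ⟨X, hXuf, hyX, hxX⟩ := hsep y x h2
        exact hxX ((hxy' ⟨X, hXuf⟩).2 hyX)
    · obtain ⟨X, hXuf, hxX, hyX⟩ := hsep x y h1
      exact hyX ((hxy' ⟨X, hXuf⟩).1 hxX)
  -- Part 3 : sup
  · intro x y
    ext U
    simp only [Set.mem_setOf_eq, Set.mem_union]
    constructor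
    · exact fun h => uf_prime U.2 h
    · rintro (h | h)
      · exact U.2.2.2.1 _ h _ le_sup_left
      · exact U.2.2.2.1 _ h _ le_sup_right
  -- Part 4 : complement
  · intro x
    ext U
    simp only [Set.mem_setOf_eq, Set.mem_compl_iff]
    constructor
    · intro h hx
      have := U.2.2.2.2.1 _ hx _ h
      rw [inf_compl_eq_bot] at this
      exact U.2.1 this
    · intro h
      exact (U.2.2.2.2.2 x).resolve_left h
  -- Part 5 : composition
  · intro x y
    ext Z
    simp only [Set.mem_setOf_eq]
    constructor
    · intro hZ
      -- first ultrafilter X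
      obtain ⟨X, hXuf, hxX, hXG⟩ :=
        exists_uf {a : A | rc a y ∈ Z.1}
          (by simp only [Set.mem_setOf_eq, rc_bot_left h5 h7 h8 h9 h10]; exact Z.2.1)
          (fun c hc d hd => Z.2.2.2.1 _ hc _ (rc_mono_left h5 y hd))
          (fun c hc a => by
            have hsplit : rc (a ⊓ c) y ⊔ rc (aᶜ ⊓ c) y ∈ Z.1 := by
              rw [← h5, ← inf_sup_right, sup_compl_eq_top, top_inf_eq]
              exact hc
            exact uf_prime Z.2 hsplit)
          x hZ
      -- second ultrafilter Y
      obtain ⟨Y, hYuf, hyY, hYH⟩ :=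
        exists_uf {b : A | ∀ a ∈ X, rc a b ∈ Z.1}
          (by
            intro hH
            have := hH ⊤ hXuf.2.1
            rw [rc_bot_right h5 h7 h8 h9 h10] at this
            exact Z.2.1 this)
          (fun c hc d hd a ha =>
            Z.2.2.2.1 _ (hc a ha) _ (rc_mono_right h5 h7 h8 h9 a hd))
          (fun c hc b => by
            by_contra hk
            push_neg at hk
            simp only [Set.mem_setOf_eq, not_forall] at hk
            obtain ⟨⟨a1, ha1, hn1⟩, ⟨a2, ha2, hn2⟩⟩ := hk
            have ha0 : a1 ⊓ a2 ∈ X := hXuf.2.2.2.1 _ ha1 _ ha2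
            have hc0 : rc (a1 ⊓ a2) (b ⊓ c) ⊔ rc (a1 ⊓ a2) (bᶜ ⊓ c) ∈ Z.1 := by
              rw [← rc_sup_right h5 h7 h8 h9, ← inf_sup_right, sup_compl_eq_top,
                top_inf_eq]
              exact hc _ ha0
            rcases uf_prime Z.2 hc0 with h | h
            · exact hn1 (Z.2.2.2.1 _ h _ (rc_mono_left h5 _ inf_le_left))
            · exact hn2 (Z.2.2.2.1 _ h _ (rc_mono_left h5 _ inf_le_right)))
          y (fun a ha => hXG ha)
      exact ⟨⟨X, hXuf⟩, hxX, ⟨Y, hYuf⟩, hyY, fun a ha b hb => hYH hb a ha⟩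
    · rintro ⟨X, hx, Y, hy, hR⟩
      exact hR x hx y hy
  -- Part 6 : converse
  · intro x
    ext W
    simp only [Set.mem_setOf_eq]
    constructor
    · intro h
      refine ⟨⟨cv '' W.1, part1 W.1 W.2⟩, ⟨cv x, h, h7 x⟩, ?_⟩
      simp only [Set.image_image, h7, Set.image_id']
    · rintro ⟨V, hxV, hW⟩
      rw [hW]
      exact ⟨x, hxV, rfl⟩
end
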